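/- arXiv:2207.04363 — 5 statements merged into one kernel-verified Lean document; each statement's English description precedes it below -/
import Mathlib

section
/- For all natural numbers m and n and every real ω ≥ 0, ∫_0^∞ x^{m+n} · e^{−x} · F_m(ω·x) dx = b_m(n, ω), i.e. ∫_0^∞ x^{m+n} e^{−x} (Σ_{k=0}^∞ (m!/((m+k)!·k!))·ω^k·x^k) dx = e^ω · Σ_{k=0}^{n} (n!·(m+n)!·m!/((n−k)!·k!·(m+k)!))·ω^k. -/
/-- The entire function `F_m(y) = ∑_{k=0}^∞ (m! / ((m+k)! k!)) y^k`
(a normalized `₀F₁` hypergeometric-type series scaled by `m!`). -/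
noncomputable def F (m : ℕ) (y : ℝ) : ℝ :=
  ∑' k : ℕ, ((m.factorial : ℝ) / ((m + k).factorial * k.factorial)) * y ^ k

/-- `b_m(n, ω) = e^ω ∑_{k=0}^n (n! (m+n)! m! / ((n-k)! k! (m+k)!)) ω^k`. -/
noncomputable def b (m n : ℕ) (ω : ℝ) : ℝ :=
  Real.exp ω * ∑ k ∈ Finset.range (n + 1),
    ((n.factorial : ℝ) * (m + n).factorial * m.factorial /
      ((n - k).factorial * k.factorial * (m + k).factorial)) * ω ^ k

open MeasureTheory Set Finset

lemma myIntegrableOn (p : ℕ) :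
    IntegrableOn (fun x : ℝ => Real.exp (-x) * x ^ p) (Set.Ioi 0) := by
  have h := Real.GammaIntegral_convergent (s := (p : ℝ) + 1) (by positivity)
  have he : (fun x : ℝ => Real.exp (-x) * x ^ ((p : ℝ) + 1 - 1)) =
      fun x : ℝ => Real.exp (-x) * x ^ p := by
    funext x
    rw [show (p : ℝ) + 1 - 1 = (p : ℝ) by ring, Real.rpow_natCast]
  rwa [he] at h

lemma myIntegral (p : ℕ) :
    ∫ x in Set.Ioi (0:ℝ), Real.exp (-x) * x ^ p = p.factorial := by
  have h := Real.Gamma_eq_integral (s := (p : ℝ) + 1) (by positivity)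
  have h2 : (fun x : ℝ => Real.exp (-x) * x ^ ((p : ℝ) + 1 - 1)) =
      fun x : ℝ => Real.exp (-x) * x ^ p := by
    funext x
    rw [show (p : ℝ) + 1 - 1 = (p : ℝ) by ring, Real.rpow_natCast]
  rw [h2] at h
  rw [← h, Real.Gamma_nat_eq_factorial]

lemma myChooseLe (N n : ℕ) : N.choose n ≤ 2 ^ N := by
  by_cases h : n ≤ N
  · calc N.choose n ≤ ∑ i ∈ range (N + 1), N.choose i :=
        Finset.single_le_sum (fun i _ => Nat.zero_le _)
          (Finset.mem_range.mpr (Nat.lt_succ_of_le h))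
    _ = 2 ^ N := Nat.sum_range_choose N
  · rw [Nat.choose_eq_zero_of_lt (Nat.lt_of_not_le h)]; exact Nat.zero_le _

set_option maxHeartbeats 800000 in
lemma mySummable (m n : ℕ) (ω : ℝ) (hω : 0 ≤ ω) :
    Summable (fun k => ((m.factorial : ℝ) / ((m + k).factorial * k.factorial)) * ω ^ k *
      (m + n + k).factorial) := by
  refine Summable.of_nonneg_of_le (fun k => by positivity) (fun k => ?_)
    ((Real.summable_pow_div_factorial (2 * ω)).mul_left
      ((m.factorial : ℝ) * n.factorial * 2 ^ (m + n)))
  have key : (m + n + k).factorial ≤ n.factorial * (2 ^ (m + n + k)) * (m + k).factorial := by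
    have h1 : (m + n + k).choose n * n.factorial * (m + k).factorial
        = (m + n + k).factorial := by
      have := Nat.choose_mul_factorial_mul_factorial
        (show n ≤ m + n + k by omega)
      have he : m + n + k - n = m + k := by omega
      rwa [he] at this
    calc (m + n + k).factorial = (m + n + k).choose n * n.factorial * (m + k).factorial :=
          h1.symm
      _ ≤ 2 ^ (m + n + k) * n.factorial * (m + k).factorial := by
          gcongr; exact myChooseLe _ _
      _ = n.factorial * 2 ^ (m + n + k) * (m + k).factorial := by ring
  have keyR : ((m + n + k).factorial : ℝ)
      ≤ (n.factorial : ℝ) * 2 ^ (m + n + k) * (m + k).factorial := by exact_mod_cast key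
  have lhs_eq : (m.factorial : ℝ) / ((m + k).factorial * k.factorial) * ω ^ k *
      (m + n + k).factorial
      = ((m.factorial : ℝ) * ω ^ k * (m + n + k).factorial) /
          ((m + k).factorial * k.factorial) := by ring
  have rhs_eq : ((m.factorial : ℝ) * n.factorial * 2 ^ (m + n)) * ((2 * ω) ^ k / k.factorial)
      = ((m.factorial : ℝ) * n.factorial * 2 ^ (m + n) * (2 * ω) ^ k) / k.factorial := by
    ring
  rw [lhs_eq, rhs_eq, div_le_div_iff₀ (by positivity) (by positivity)]
  calc (m.factorial : ℝ) * ω ^ k * (m + n + k).factorial * k.factorial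
      ≤ (m.factorial : ℝ) * ω ^ k *
          ((n.factorial : ℝ) * 2 ^ (m + n + k) * (m + k).factorial) * k.factorial := by
        gcongr
    _ = (m.factorial : ℝ) * n.factorial * 2 ^ (m + n) * (2 * ω) ^ k *
          ((m + k).factorial * k.factorial) := by
        rw [pow_add, mul_pow]; ring

noncomputable def aa (m n q : ℕ) : ℝ :=
  if q ≤ n then
    ((n.factorial : ℝ) * (m + n).factorial * m.factorial /
      ((n - q).factorial * q.factorial * (m + q).factorial))
  else 0

lemma myTerm (m n k i : ℕ) (hi : i ≤ k) :
    (1 / (i.factorial : ℝ)) * aa m n (k - i)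
      = ((m + n).factorial * (m.factorial : ℝ) / (m + k).factorial) *
          (((m + k).choose i : ℝ) * (n.choose (k - i) : ℝ)) := by
  by_cases h : k - i ≤ n
  · rw [aa, if_pos h]
    rw [Nat.cast_choose ℝ h, Nat.cast_choose ℝ (show i ≤ m + k by omega),
      show m + k - i = m + (k - i) by omega]
    have h1 : ((n - (k - i)).factorial : ℝ) ≠ 0 := by positivity
    have h2 : ((m + (k - i)).factorial : ℝ) ≠ 0 := by positivity
    have h3 : ((m + k).factorial : ℝ) ≠ 0 := by positivity
    have h4 : (((k - i)).factorial : ℝ) ≠ 0 := by positivity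
    have h5 : ((i).factorial : ℝ) ≠ 0 := by positivity
    field_simp
  · have hz : n.choose (k - i) = 0 := Nat.choose_eq_zero_of_lt (by omega)
    rw [aa, if_neg h, hz]
    simp

lemma myCoeff (m n k : ℕ) :
    ∑ kl ∈ Finset.HasAntidiagonal.antidiagonal k, (1 / (kl.1.factorial : ℝ)) * aa m n kl.2
      = (m.factorial : ℝ) / ((m + k).factorial * k.factorial) * (m + n + k).factorial := by
  rw [Finset.Nat.sum_antidiagonal_eq_sum_range_succ_mk]
  have hsum : ∀ i ∈ Finset.range (k + 1),
      (1 / (i.factorial : ℝ)) * aa m n (k - i)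
        = ((m + n).factorial * (m.factorial : ℝ) / (m + k).factorial) *
            (((m + k).choose i : ℝ) * (n.choose (k - i) : ℝ)) := by
    intro i hi
    exact myTerm m n k i (by simpa [Nat.lt_succ_iff] using hi)
  rw [Finset.sum_congr rfl hsum, ← Finset.mul_sum]
  have hv : ((m + n + k).choose k : ℝ)
      = ∑ i ∈ Finset.range (k + 1), ((m + k).choose i : ℝ) * (n.choose (k - i) : ℝ) := by
    have := Nat.add_choose_eq (m + k) n k
    rw [Finset.Nat.sum_antidiagonal_eq_sum_range_succ_mk] at this
    rw [show m + n + k = m + k + n by omega, this]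
    push_cast
    rfl
  rw [← hv, Nat.cast_choose ℝ (show k ≤ m + n + k by omega),
    show m + n + k - k = m + n by omega]
  have h1 : ((m + n).factorial : ℝ) ≠ 0 := by positivity
  have h3 : ((m + k).factorial : ℝ) ≠ 0 := by positivity
  have h4 : ((k).factorial : ℝ) ≠ 0 := by positivity
  field_simp

set_option maxHeartbeats 1000000 in
/-- Closed-form evaluation of the paper's quantities `b_{i,j}` (Kummer transformation):
`∫_0^∞ x^{m+n} e^{-x} F_m(ω x) dx = b_m(n, ω)` for `ω ≥ 0`. -/
theorem stmt4 (m n : ℕ) (ω : ℝ) (hω : 0 ≤ ω) :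
    ∫ x in Set.Ioi (0 : ℝ), x ^ (m + n) * Real.exp (-x) * F m (ω * x) = b m n ω := by
  set c : ℕ → ℝ := fun k => (m.factorial : ℝ) / ((m + k).factorial * k.factorial) with hc
  have hc_nonneg : ∀ k, 0 ≤ c k := fun k => by rw [hc]; positivity
  -- the summand functions
  set f : ℕ → ℝ → ℝ := fun k x => (c k * ω ^ k) * (Real.exp (-x) * x ^ (m + n + k)) with hf
  -- rewrite the integrand
  have hF : ∀ x : ℝ, x ^ (m + n) * Real.exp (-x) * F m (ω * x) = ∑' k, f k x := by
    intro x
    rw [F, ← tsum_mul_left]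
    refine tsum_congr fun k => ?_
    rw [hf, hc]
    simp only [mul_pow, pow_add]
    ring
  -- integrability of each summand
  have hint : ∀ k : ℕ, Integrable (f k) (volume.restrict (Set.Ioi 0)) := fun k =>
    ((myIntegrableOn (m + n + k)).const_mul _)
  -- value of each integral
  have hval : ∀ k : ℕ, ∫ x in Set.Ioi (0:ℝ), f k x
      = c k * ω ^ k * (m + n + k).factorial := by
    intro k
    rw [hf]
    simp only []
    rw [MeasureTheory.integral_const_mul, myIntegral]
  -- integrals of norms
  have hnorm : ∀ k : ℕ, ∫ x in Set.Ioi (0:ℝ), ‖f k x‖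
      = c k * ω ^ k * (m + n + k).factorial := by
    intro k
    rw [← hval k]
    refine setIntegral_congr_fun measurableSet_Ioi fun x hx => ?_
    have hx0 : (0:ℝ) < x := hx
    have : 0 ≤ f k x := by
      rw [hf]
      have := hc_nonneg k
      positivity
    exact Real.norm_of_nonneg this
  have hsummable : Summable fun k => c k * ω ^ k * ((m + n + k).factorial : ℝ) :=
    mySummable m n ω hω
  have hsum_norm : Summable fun k => ∫ x in Set.Ioi (0:ℝ), ‖f k x‖ := by
    simpa only [hnorm] using hsummable
  -- swap integral and sum
  have hswap : ∫ x in Set.Ioi (0:ℝ), x ^ (m + n) * Real.exp (-x) * F m (ω * x)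
      = ∑' k, ∫ x in Set.Ioi (0:ℝ), f k x := by
    rw [MeasureTheory.integral_tsum_of_summable_integral_norm hint hsum_norm]
    refine setIntegral_congr_fun measurableSet_Ioi fun x _ => hF x
  rw [hswap]
  have hLHS : ∑' k, ∫ x in Set.Ioi (0:ℝ), f k x
      = ∑' k, c k * ω ^ k * ((m + n + k).factorial : ℝ) := tsum_congr hval
  rw [hLHS]
  -- now the right-hand side
  have hexp : Real.exp ω = ∑' l : ℕ, ω ^ l / (l.factorial : ℝ) := by
    rw [Real.exp_eq_exp_ℝ, NormedSpace.exp_eq_tsum_div]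
  have hS : (∑ k ∈ Finset.range (n + 1),
        ((n.factorial : ℝ) * (m + n).factorial * m.factorial /
          ((n - k).factorial * k.factorial * (m + k).factorial)) * ω ^ k)
      = ∑' q : ℕ, aa m n q * ω ^ q := by
    rw [tsum_eq_sum (s := Finset.range (n + 1))
      (fun q hq => by
        rw [aa, if_neg (by simp only [Finset.mem_range] at hq; omega), zero_mul])]
    refine Finset.sum_congr rfl fun q hq => ?_
    rw [aa, if_pos (by simp only [Finset.mem_range] at hq; omega)]
  rw [b, hexp, hS]
  have hf1 : Summable fun l : ℕ => ‖ω ^ l / (l.factorial : ℝ)‖ := by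
    simpa only [norm_div, norm_pow, Real.norm_eq_abs, Nat.abs_cast] using
      Real.summable_pow_div_factorial |ω|
  have hg1 : Summable fun q : ℕ => ‖aa m n q * ω ^ q‖ :=
    summable_of_ne_finset_zero (s := Finset.range (n + 1))
      (fun q hq => by
        rw [aa, if_neg (by simp only [Finset.mem_range] at hq; omega), zero_mul, norm_zero])
  rw [tsum_mul_tsum_eq_tsum_sum_antidiagonal_of_summable_norm hf1 hg1]
  refine tsum_congr fun k => ?_
  have hterm : ∀ kl ∈ Finset.HasAntidiagonal.antidiagonal k,
      (ω ^ kl.1 / (kl.1.factorial : ℝ)) * (aa m n kl.2 * ω ^ kl.2)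
        = ((1 / (kl.1.factorial : ℝ)) * aa m n kl.2) * ω ^ k := by
    intro kl hkl
    have hk : kl.1 + kl.2 = k := Finset.HasAntidiagonal.mem_antidiagonal.mp hkl
    rw [← hk, pow_add]
    ring
  rw [Finset.sum_congr rfl hterm, ← Finset.sum_mul, myCoeff]
  rw [hc]
  ring
end

section
/- For all natural numbers m and K, every real γ ≥ 0, and every real ω ≥ 0, ∫_0^∞ x^m · e^{−x} · (1 + γx)^K · F_m(ω·x) dx = Σ_{n=0}^{K} binom(K, n) · γ^n · b_m(n, ω). -/
open MeasureTheory Set Filter Finset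


lemma integrableOn_pow_exp (p : ℕ) :
    IntegrableOn (fun x : ℝ => x ^ p * Real.exp (-x)) (Set.Ioi 0) := by
  have h := Real.GammaIntegral_convergent (s := (p : ℝ) + 1) (by positivity)
  refine h.congr_fun (fun x hx => ?_) measurableSet_Ioi
  beta_reduce
  rw [add_sub_cancel_right, Real.rpow_natCast, mul_comm]

lemma integral_pow_exp (p : ℕ) :
    ∫ x in Set.Ioi (0:ℝ), x ^ p * Real.exp (-x) = p.factorial := by
  have h := Real.Gamma_eq_integral (s := (p : ℝ) + 1) (by positivity)
  rw [Real.Gamma_nat_eq_factorial] at h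
  rw [h]
  refine setIntegral_congr_fun measurableSet_Ioi fun x hx => ?_
  rw [add_sub_cancel_right, Real.rpow_natCast, mul_comm]

lemma integrableOn_pow_exp_binom (p K : ℕ) (γ : ℝ) :
    IntegrableOn (fun x : ℝ => x ^ p * Real.exp (-x) * (1 + γ * x) ^ K) (Set.Ioi 0) := by
  have heq : ∀ x : ℝ, x ^ p * Real.exp (-x) * (1 + γ * x) ^ K
      = ∑ n ∈ Finset.range (K + 1), ((K.choose n : ℝ) * γ ^ n) * (x ^ (p + n) * Real.exp (-x)) := by
    intro x
    rw [add_comm (1:ℝ) (γ*x), add_pow]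
    rw [Finset.mul_sum]
    refine Finset.sum_congr rfl fun n hn => ?_
    rw [mul_pow, pow_add]
    ring
  simp only [heq]
  exact integrable_finset_sum _ fun n _ =>
    ((integrableOn_pow_exp (p + n)).const_mul _)

lemma integral_pow_exp_binom (p K : ℕ) (γ : ℝ) :
    ∫ x in Set.Ioi (0:ℝ), x ^ p * Real.exp (-x) * (1 + γ * x) ^ K
      = ∑ n ∈ Finset.range (K + 1), (K.choose n : ℝ) * γ ^ n * ((p + n).factorial : ℝ) := by
  have heq : ∀ x : ℝ, x ^ p * Real.exp (-x) * (1 + γ * x) ^ K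
      = ∑ n ∈ Finset.range (K + 1), ((K.choose n : ℝ) * γ ^ n) * (x ^ (p + n) * Real.exp (-x)) := by
    intro x
    rw [add_comm (1:ℝ) (γ*x), add_pow]
    rw [Finset.mul_sum]
    refine Finset.sum_congr rfl fun n hn => ?_
    rw [mul_pow, pow_add]
    ring
  simp only [heq]
  rw [integral_finset_sum _ fun n _ => ((integrableOn_pow_exp (p + n)).const_mul _)]
  refine Finset.sum_congr rfl fun n hn => ?_
  rw [integral_const_mul, integral_pow_exp]


lemma summable_aux (m n : ℕ) (ω : ℝ) (hω : 0 ≤ ω) :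
    Summable (fun k : ℕ => ((m + n + k).factorial : ℝ) * ω ^ k /
      ((m + k).factorial * k.factorial)) := by
  set f : ℕ → ℝ := fun k => ((m + n + k).factorial : ℝ) * ω ^ k /
      ((m + k).factorial * k.factorial) with hf
  have hfpos : ∀ k, 0 ≤ f k := fun k => by positivity
  refine summable_of_ratio_norm_eventually_le (r := 1/2) (by norm_num) ?_
  rw [eventually_atTop]
  refine ⟨⌈2 * ω * (n + 1)⌉₊, fun k hk => ?_⟩
  have hk' : 2 * ω * (n + 1) ≤ (k : ℝ) + 1 := by
    calc 2 * ω * (n + 1) ≤ (⌈2 * ω * (n + 1)⌉₊ : ℝ) := Nat.le_ceil _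
    _ ≤ (k : ℝ) := by exact_mod_cast hk
    _ ≤ (k : ℝ) + 1 := by linarith
  rw [Real.norm_of_nonneg (hfpos _), Real.norm_of_nonneg (hfpos _)]
  have hrec : f (k + 1) = (ω * (m + n + k + 1) / (((m + k : ℕ) + 1) * (k + 1))) * f k := by
    have e1 : m + n + (k + 1) = (m + n + k) + 1 := by omega
    have e2 : m + (k + 1) = (m + k) + 1 := by omega
    rw [hf]
    simp only [e1, e2, Nat.factorial_succ, pow_succ]
    push_cast
    have h1 : ((m + n + k).factorial : ℝ) ≠ 0 := by positivity
    have h2 : ((m + k).factorial : ℝ) ≠ 0 := by positivity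
    have h3 : (k.factorial : ℝ) ≠ 0 := by positivity
    have h4 : ((m : ℝ) + k + 1) ≠ 0 := by positivity
    have h5 : ((k : ℝ) + 1) ≠ 0 := by positivity
    field_simp
  rw [hrec]
  have hb : ω * (m + n + k + 1) / (((m + k : ℕ) + 1) * (k + 1)) ≤ 1/2 := by
    rw [div_le_iff₀ (by positivity)]
    push_cast
    have h1 : (m:ℝ) + n + k + 1 ≤ ((n:ℝ) + 1) * ((m:ℝ) + k + 1) := by nlinarith [mul_nonneg (Nat.cast_nonneg n : (0:ℝ) ≤ n) (Nat.cast_nonneg k : (0:ℝ) ≤ k), mul_nonneg (Nat.cast_nonneg n : (0:ℝ) ≤ n) (Nat.cast_nonneg m : (0:ℝ) ≤ m)]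
    have h2 : (2 * ω * ((n:ℝ) + 1)) * (((m:ℝ) + k + 1) / 2) ≤ ((k:ℝ) + 1) * (((m:ℝ) + k + 1) / 2) := by
      apply mul_le_mul_of_nonneg_right hk'
      positivity
    nlinarith [mul_le_mul_of_nonneg_left h1 hω]
  exact mul_le_mul_of_nonneg_right hb (hfpos k)


lemma vandermonde_real (m n k : ℕ) :
    ∑ i ∈ Finset.range (k + 1),
      (if i ≤ n then ((n.factorial : ℝ) * (m + n).factorial * m.factorial /
        ((n - i).factorial * i.factorial * (m + i).factorial * (k - i).factorial)) else 0)
      = (m.factorial : ℝ) * (m + n + k).factorial / ((m + k).factorial * k.factorial) := by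
  have hfac : ∀ j : ℕ, ((j.factorial : ℝ)) ≠ 0 := fun j => by positivity
  -- rewrite each term
  have step1 : ∀ i ∈ Finset.range (k + 1),
      (if i ≤ n then ((n.factorial : ℝ) * (m + n).factorial * m.factorial /
        ((n - i).factorial * i.factorial * (m + i).factorial * (k - i).factorial)) else 0)
      = ((m.factorial : ℝ) * n.factorial / k.factorial) *
          (if i ≤ n then ((k.choose i : ℝ) * ((m + n).choose (n - i) : ℝ)) else 0) := by
    intro i hi
    rw [Finset.mem_range] at hi
    have hik : i ≤ k := by omega
    by_cases h : i ≤ n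
    · simp only [h, if_true]
      rw [Nat.cast_choose ℝ hik, Nat.cast_choose ℝ (by omega : n - i ≤ m + n)]
      have e1 : m + n - (n - i) = m + i := by omega
      rw [e1]
      field_simp
    · simp [h]
  rw [Finset.sum_congr rfl step1, ← Finset.mul_sum]
  -- identify the sum with Vandermonde
  have hswap : ∑ i ∈ Finset.range (k + 1),
      (if i ≤ n then ((k.choose i : ℝ) * ((m + n).choose (n - i) : ℝ)) else 0)
      = ∑ i ∈ Finset.range (n + 1), ((k.choose i : ℝ) * ((m + n).choose (n - i) : ℝ)) := by
    rw [← Finset.sum_filter]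
    rw [show (Finset.range (k+1)).filter (fun i => i ≤ n)
        = (Finset.range (n+1)).filter (fun i => i ≤ k) by
      ext i; simp only [Finset.mem_filter, Finset.mem_range]; omega]
    rw [Finset.sum_filter_of_ne]
    intro i hi hne
    by_contra h
    push_neg at h
    rw [Nat.choose_eq_zero_of_lt h] at hne
    simp at hne
  rw [hswap]
  have hv : ((k + (m + n)).choose n : ℝ)
      = ∑ i ∈ Finset.range (n + 1), ((k.choose i : ℝ) * ((m + n).choose (n - i) : ℝ)) := by
    rw_mod_cast [Nat.add_choose_eq, Finset.Nat.sum_antidiagonal_eq_sum_range_succ_mk]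
  rw [← hv, Nat.cast_choose ℝ (by omega : n ≤ k + (m + n))]
  have e2 : k + (m + n) - n = m + k := by omega
  have e3 : k + (m + n) = m + n + k := by omega
  rw [e2, e3]
  field_simp

lemma tsum_eq_b (m n : ℕ) (ω : ℝ) (hω : 0 ≤ ω) :
    ∑' k : ℕ, ((m.factorial : ℝ) * (m + n + k).factorial /
        ((m + k).factorial * k.factorial)) * ω ^ k = b m n ω := by
  set a : ℕ → ℝ := fun j => if j ≤ n then
    ((n.factorial : ℝ) * (m + n).factorial * m.factorial /
      ((n - j).factorial * j.factorial * (m + j).factorial)) * ω ^ j else 0 with ha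
  set e : ℕ → ℝ := fun i => ω ^ i / i.factorial with he
  have ha0 : ∀ j ∉ Finset.range (n + 1), a j = 0 := by
    intro j hj
    rw [Finset.mem_range] at hj
    simp only [ha, if_neg (by omega : ¬ j ≤ n)]
  have ha_norm : Summable fun j => ‖a j‖ := by
    apply summable_of_ne_finset_zero (s := Finset.range (n + 1))
    intro j hj
    rw [ha0 j hj, norm_zero]
  have he_norm : Summable fun i => ‖e i‖ := by
    refine ((Real.summable_pow_div_factorial |ω|).congr fun i => ?_)
    simp [he, abs_div, abs_pow]
  have hb : b m n ω = (∑' j, a j) * (∑' i, e i) := by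
    have h1 : (∑' j, a j) = ∑ j ∈ Finset.range (n + 1), a j := tsum_eq_sum ha0
    have h2 : (∑' i, e i) = Real.exp ω := by
      rw [Real.exp_eq_exp_ℝ, NormedSpace.exp_eq_tsum_div]
    rw [h1, h2, b, mul_comm]
    congr 1
    refine Finset.sum_congr rfl fun j hj => ?_
    rw [Finset.mem_range] at hj
    simp only [ha, if_pos (by omega : j ≤ n)]
  rw [hb, tsum_mul_tsum_eq_tsum_sum_antidiagonal_of_summable_norm ha_norm he_norm]
  refine (tsum_congr fun k => ?_).symm
  rw [Finset.Nat.sum_antidiagonal_eq_sum_range_succ_mk]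
  have : ∀ i ∈ Finset.range (k + 1), a i * e (k - i)
      = (if i ≤ n then ((n.factorial : ℝ) * (m + n).factorial * m.factorial /
        ((n - i).factorial * i.factorial * (m + i).factorial * (k - i).factorial)) else 0) * ω ^ k := by
    intro i hi
    rw [Finset.mem_range] at hi
    by_cases h : i ≤ n
    · simp only [ha, he, if_pos h]
      have hpow : ω ^ i * ω ^ (k - i) = ω ^ k := by
        rw [← pow_add]
        congr 1
        omega
    
      rw [← hpow]
      ring
    · simp [ha, h]
  rw [Finset.sum_congr rfl this, ← Finset.sum_mul, vandermonde_real]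

/-- Evaluation of the auxiliary function `𝒦_i^{(1)}` of Appendix A:
`∫_0^∞ x^m e^{-x} (1 + γ x)^K F_m(ω x) dx = ∑_{n=0}^K C(K,n) γ^n b_m(n, ω)`. -/
theorem stmt5 (m K : ℕ) (γ ω : ℝ) (hγ : 0 ≤ γ) (hω : 0 ≤ ω) :
    ∫ x in Set.Ioi (0 : ℝ), x ^ m * Real.exp (-x) * (1 + γ * x) ^ K * F m (ω * x) =
      ∑ n ∈ Finset.range (K + 1), (K.choose n : ℝ) * γ ^ n * b m n ω := by
  set g : ℕ → ℝ → ℝ := fun k x =>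
    ((m.factorial : ℝ) * ω ^ k / ((m + k).factorial * k.factorial)) *
      (x ^ (m + k) * Real.exp (-x) * (1 + γ * x) ^ K) with hg
  -- pointwise expansion of the integrand
  have hpt : ∀ x : ℝ, x ^ m * Real.exp (-x) * (1 + γ * x) ^ K * F m (ω * x)
      = ∑' k : ℕ, g k x := by
    intro x
    rw [F, ← tsum_mul_left]
    refine tsum_congr fun k => ?_
    rw [hg]
    simp only [mul_pow, pow_add]
    ring
  -- the termwise integrals
  have hint : ∀ k : ℕ, ∫ x in Set.Ioi (0:ℝ), g k x
      = ((m.factorial : ℝ) * ω ^ k / ((m + k).factorial * k.factorial)) *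
        ∑ n ∈ Finset.range (K + 1), (K.choose n : ℝ) * γ ^ n * ((m + k + n).factorial : ℝ) := by
    intro k
    rw [hg]
    simp only
    rw [integral_const_mul, integral_pow_exp_binom (m + k) K γ]
  have hmeas : ∀ k : ℕ, AEStronglyMeasurable (g k) (volume.restrict (Set.Ioi 0)) := by
    intro k
    refine Continuous.aestronglyMeasurable ?_
    exact (continuous_const.mul (((continuous_pow (m + k)).mul
      (Real.continuous_exp.comp continuous_neg)).mul
      ((continuous_const.add (continuous_const.mul continuous_id)).pow K)))
  have hgint : ∀ k : ℕ, IntegrableOn (g k) (Set.Ioi 0) := fun k =>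
    (integrableOn_pow_exp_binom (m + k) K γ).const_mul _
  have hgnonneg : ∀ k : ℕ, ∀ x ∈ Set.Ioi (0:ℝ), 0 ≤ g k x := by
    intro k x hx
    rw [Set.mem_Ioi] at hx
    have h1 : (0:ℝ) ≤ 1 + γ * x := by nlinarith
    rw [hg]
    have : (0:ℝ) ≤ x := le_of_lt hx
    positivity
  -- the sum of integrals of norms
  set r : ℕ → ℝ := fun k =>
    ((m.factorial : ℝ) * ω ^ k / ((m + k).factorial * k.factorial)) *
      ∑ n ∈ Finset.range (K + 1), (K.choose n : ℝ) * γ ^ n * ((m + k + n).factorial : ℝ) with hr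
  have hrsum : ∀ k : ℕ, r k = ∑ n ∈ Finset.range (K + 1),
      ((K.choose n : ℝ) * γ ^ n) * (((m.factorial : ℝ) * (m + n + k).factorial /
        ((m + k).factorial * k.factorial)) * ω ^ k) := by
    intro k
    rw [hr]
    simp only [Finset.mul_sum]
    refine Finset.sum_congr rfl fun n hn => ?_
    have e : m + k + n = m + n + k := Nat.add_right_comm m k n
    rw [e]
    ring
  have hrsummable : Summable r := by
    rw [show r = fun k => ∑ n ∈ Finset.range (K + 1),
      ((K.choose n : ℝ) * γ ^ n) * (((m.factorial : ℝ) * (m + n + k).factorial /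
        ((m + k).factorial * k.factorial)) * ω ^ k) from funext hrsum]
    refine summable_sum fun n hn => ?_
    refine Summable.mul_left _ ?_
    refine ((summable_aux m n ω hω).mul_left (m.factorial : ℝ)).congr fun k => ?_
    ring
  have hrnonneg : ∀ k, 0 ≤ r k := by
    intro k
    rw [hr]
    refine mul_nonneg (by positivity) (Finset.sum_nonneg fun n hn => by positivity)
  -- finiteness of the lintegral sum
  have hfin : ∑' k : ℕ, ∫⁻ x, ‖g k x‖₊ ∂(volume.restrict (Set.Ioi 0)) ≠ ⊤ := by
    have hnorm : ∀ k : ℕ, ∫⁻ x, ‖g k x‖₊ ∂(volume.restrict (Set.Ioi 0))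
        = ENNReal.ofReal (r k) := by
      intro k
      simp only [← enorm_eq_nnnorm]
      rw [← ofReal_integral_norm_eq_lintegral_enorm (hgint k)]
      congr 1
      simp only [hr]
      rw [← hint k]
      refine setIntegral_congr_fun measurableSet_Ioi fun x hx => ?_
      exact Real.norm_of_nonneg (hgnonneg k x hx)
    simp only [hnorm]
    rw [← ENNReal.ofReal_tsum_of_nonneg hrnonneg hrsummable]
    exact ENNReal.ofReal_ne_top
  -- interchange
  calc ∫ x in Set.Ioi (0:ℝ), x ^ m * Real.exp (-x) * (1 + γ * x) ^ K * F m (ω * x)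
      = ∫ x in Set.Ioi (0:ℝ), ∑' k : ℕ, g k x := by simp only [hpt]
    _ = ∑' k : ℕ, ∫ x in Set.Ioi (0:ℝ), g k x := integral_tsum hmeas hfin
    _ = ∑' k : ℕ, r k := by
        refine tsum_congr fun k => ?_
        simp only [hr]
        rw [hint k]
    _ = ∑ n ∈ Finset.range (K + 1), (K.choose n : ℝ) * γ ^ n * b m n ω := by
        rw [show r = fun k => ∑ n ∈ Finset.range (K + 1),
          ((K.choose n : ℝ) * γ ^ n) * (((m.factorial : ℝ) * (m + n + k).factorial /
            ((m + k).factorial * k.factorial)) * ω ^ k) from funext hrsum]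
        rw [Summable.tsum_finsetSum (fun n hn => Summable.mul_left _
          (((summable_aux m n ω hω).mul_left (m.factorial : ℝ)).congr fun k => by ring))]
        refine Finset.sum_congr rfl fun n hn => ?_
        rw [tsum_mul_left, tsum_eq_b m n ω hω]
end

section
/- (Generalized Andréief integral identity.) Let μ be a σ-finite measure on ℝ, let n ≥ 1, and let f, g : Fin n → ℝ → ℂ be measurable functions such that for all i, j the product x ↦ f_i(x)·g_j(x) is μ-integrable and such that the function (x_1,…,x_n) ↦ det[f_i(x_j)]_{i,j} · det[g_i(x_j)]_{i,j} is integrable with respect to the n-fold product measure μ^⊗n. Then ∫_{ℝ^n} det[f_i(x_j)]_{i,j} · det[g_i(x_j)]_{i,j} dμ^⊗n(x_1,…,x_n) = n! · det[∫_ℝ f_i(x)·g_j(x) dμ(x)]_{i,j}. -/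
open MeasureTheory

/-- Generalized Andréief integral identity: for a σ-finite measure `μ` on `ℝ`,
`n ≥ 1`, and measurable `f g : Fin n → ℝ → ℂ` with all products `f i * g j`
`μ`-integrable and the product of determinants integrable with respect to the
`n`-fold product measure,
`∫ det[f i (x j)] det[g i (x j)] dμ^⊗n = n! det[∫ f i x * g j x dμ]`. -/
theorem stmt6 (μ : Measure ℝ) [SigmaFinite μ] (n : ℕ) (hn : 1 ≤ n)
    (f g : Fin n → ℝ → ℂ)
    (hf : ∀ i, Measurable (f i)) (hg : ∀ i, Measurable (g i))
    (hfg : ∀ i j, Integrable (fun x => f i x * g j x) μ)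
    (hdet : Integrable
      (fun x : Fin n → ℝ =>
        (Matrix.of fun i j => f i (x j)).det * (Matrix.of fun i j => g i (x j)).det)
      (Measure.pi fun _ => μ)) :
    ∫ x : Fin n → ℝ,
        (Matrix.of fun i j => f i (x j)).det * (Matrix.of fun i j => g i (x j)).det
        ∂(Measure.pi fun _ => μ)
      = (n.factorial : ℂ) * (Matrix.of fun i j => ∫ x, f i x * g j x ∂μ).det := by
  classical
  letI : MeasureSpace ℝ := { volume := μ }
  haveI : SigmaFinite (volume : Measure ℝ) := ‹SigmaFinite μ›
  set ν : Measure (Fin n → ℝ) := Measure.pi fun _ => μ with hν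
  set F : (Fin n → ℝ) → ℂ := fun x => (Matrix.of fun i j => f i (x j)).det with hF
  set c : Equiv.Perm (Fin n) → ℂ := fun σ => ((Equiv.Perm.sign σ : ℤ) : ℂ) with hc
  have csq : ∀ σ : Equiv.Perm (Fin n), c σ * c σ = 1 := by
    intro σ
    rw [hc, ← Int.cast_mul, ← Units.val_mul, Int.units_mul_self]
    simp
  have hprod : ∀ τ σ : Equiv.Perm (Fin n),
      Integrable (fun x : Fin n → ℝ => ∏ j, (f (τ j) (x j) * g (σ j) (x j))) ν :=
    fun τ σ => Integrable.fintype_prod (f := fun j x => f (τ j) x * g (σ j) x)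
      (fun j => hfg (τ j) (σ j))
  have hexp : ∀ (σ : Equiv.Perm (Fin n)) (x : Fin n → ℝ),
      F x * ∏ j, g (σ j) (x j)
        = ∑ τ : Equiv.Perm (Fin n), c τ * ∏ j, (f (τ j) (x j) * g (σ j) (x j)) := by
    intro σ x
    show (Matrix.of fun i j => f i (x j)).det * _ = _
    rw [Matrix.det_apply, Finset.sum_mul]
    refine Finset.sum_congr rfl fun τ _ => ?_
    simp [Finset.prod_mul_distrib, Units.smul_def, zsmul_eq_mul, hc, mul_assoc]
  have hFint : ∀ σ : Equiv.Perm (Fin n),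
      Integrable (fun x => F x * ∏ j, g (σ j) (x j)) ν := by
    intro σ
    have h : (fun x : Fin n → ℝ => F x * ∏ j, g (σ j) (x j))
        = fun x => ∑ τ : Equiv.Perm (Fin n), c τ * ∏ j, (f (τ j) (x j) * g (σ j) (x j)) :=
      funext fun x => hexp σ x
    rw [h]
    exact integrable_finset_sum _ fun τ _ => ((hprod τ σ).const_mul _)
  set I : ℂ := ∫ x, F x * ∏ j, g j (x j) ∂ν with hI
  have hIσ : ∀ σ : Equiv.Perm (Fin n),
      ∫ x, F x * ∏ j, g (σ j) (x j) ∂ν = c σ * I := by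
    intro σ
    have hmp := measurePreserving_piCongrLeft (fun _ : Fin n => μ) (σ⁻¹ : Equiv.Perm (Fin n))
    have hT : ∀ x : Fin n → ℝ,
        (MeasurableEquiv.piCongrLeft (fun _ : Fin n => ℝ)
          ((σ⁻¹ : Equiv.Perm (Fin n)) : Fin n ≃ Fin n)) x = fun j => x (σ j) := by
      intro x
      funext j
      simp [MeasurableEquiv.coe_piCongrLeft]
      rw [Equiv.piCongrLeft_apply_eq_cast]
      rfl
    have hdetperm : ∀ x : Fin n → ℝ,
        (Matrix.of fun i j => f i (x (σ j))).det = c σ * F x := by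
      intro x
      have h3 := Matrix.det_permute' σ (Matrix.of fun i j => f i (x j))
      have h4 : (Matrix.of fun i j => f i (x j)).submatrix id σ
          = Matrix.of fun i j => f i (x (σ j)) := by
        ext i j; simp [Matrix.submatrix_apply]
      rw [h4] at h3
      rw [h3, hc, hF]
    rw [← hmp.integral_comp' (fun x => F x * ∏ j, g (σ j) (x j))]
    have : ∀ x : Fin n → ℝ,
        F ((MeasurableEquiv.piCongrLeft (fun _ : Fin n => ℝ)
            ((σ⁻¹ : Equiv.Perm (Fin n)) : Fin n ≃ Fin n)) x)
          * ∏ j, g (σ j) (((MeasurableEquiv.piCongrLeft (fun _ : Fin n => ℝ)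
            ((σ⁻¹ : Equiv.Perm (Fin n)) : Fin n ≃ Fin n)) x) j)
        = c σ * (F x * ∏ j, g j (x j)) := by
      intro x
      rw [hT x]
      have hp : (∏ j, g (σ j) (x (σ j))) = ∏ j, g j (x j) :=
        Equiv.prod_comp σ (fun j => g j (x j))
      rw [hp]
      have : F (fun j => x (σ j)) = c σ * F x := hdetperm x
      rw [this]
      ring
    simp_rw [this]
    rw [integral_const_mul]
  have hgd : ∀ x : Fin n → ℝ,
      (Matrix.of fun i j => g i (x j)).det = ∑ σ : Equiv.Perm (Fin n), c σ * ∏ j, g (σ j) (x j) := by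
    intro x
    rw [Matrix.det_apply]
    refine Finset.sum_congr rfl fun σ _ => ?_
    simp [hc, Units.smul_def, zsmul_eq_mul]
  have key : ∫ x, F x * (Matrix.of fun i j => g i (x j)).det ∂ν = (n.factorial : ℂ) * I := by
    calc ∫ x, F x * (Matrix.of fun i j => g i (x j)).det ∂ν
        = ∫ x, ∑ σ : Equiv.Perm (Fin n), c σ * (F x * ∏ j, g (σ j) (x j)) ∂ν := by
          congr 1; funext x
          rw [hgd x, Finset.mul_sum]
          exact Finset.sum_congr rfl fun σ _ => by ring
      _ = ∑ σ : Equiv.Perm (Fin n), ∫ x, c σ * (F x * ∏ j, g (σ j) (x j)) ∂ν :=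
          integral_finset_sum _ fun σ _ => ((hFint σ).const_mul _)
      _ = ∑ σ : Equiv.Perm (Fin n), c σ * ∫ x, F x * ∏ j, g (σ j) (x j) ∂ν := by
          simp_rw [integral_const_mul]
      _ = ∑ σ : Equiv.Perm (Fin n), c σ * (c σ * I) := by
          refine Finset.sum_congr rfl fun σ _ => ?_
          rw [hIσ σ]
      _ = ∑ _σ : Equiv.Perm (Fin n), I := by
          refine Finset.sum_congr rfl fun σ _ => ?_
          rw [← mul_assoc, csq σ, one_mul]
      _ = (n.factorial : ℂ) * I := by
          rw [Finset.sum_const, Finset.card_univ, Fintype.card_perm, Fintype.card_fin,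
            nsmul_eq_mul]
  have hIval : I = (Matrix.of fun i j => ∫ x, f i x * g j x ∂μ).det := by
    have hone : ∀ x : Fin n → ℝ,
        F x * ∏ j, g j (x j)
          = ∑ τ : Equiv.Perm (Fin n), c τ * ∏ j, (f (τ j) (x j) * g j (x j)) := by
      intro x
      have := hexp 1 x
      simpa using this
    calc I = ∫ x, ∑ τ : Equiv.Perm (Fin n), c τ * ∏ j, (f (τ j) (x j) * g j (x j)) ∂ν := by
          rw [hI]; congr 1; funext x; exact hone x
      _ = ∑ τ : Equiv.Perm (Fin n), ∫ x, c τ * ∏ j, (f (τ j) (x j) * g j (x j)) ∂ν :=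
          integral_finset_sum _ fun τ _ => ((hprod τ 1).const_mul _)
      _ = ∑ τ : Equiv.Perm (Fin n), c τ * ∏ j, ∫ x, f (τ j) x * g j x ∂μ := by
          refine Finset.sum_congr rfl fun τ _ => ?_
          rw [integral_const_mul]
          congr 1
          exact integral_fintype_prod_eq_prod (ι := Fin n) (fun j x => f (τ j) x * g j x)
      _ = (Matrix.of fun i j => ∫ x, f i x * g j x ∂μ).det := by
          rw [Matrix.det_apply]
          refine Finset.sum_congr rfl fun τ _ => ?_
          simp [hc, Units.smul_def, zsmul_eq_mul]
  rw [key, hIval]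
end

section
/- Let m, K, q, r be natural numbers with 0 ≤ q ≤ K, 0 ≤ r ≤ K, K ≥ 1, let ω_1, …, ω_q ≥ 0 and γ_1, …, γ_r > 0 be real numbers. Define the K×K matrices M₁(λ) with entries M₁_{i,j} = λ_i^{j−1} for 1 ≤ j ≤ K−r and M₁_{i,j} = (1 + γ_{j−(K−r)}·λ_i)^K for K−r < j ≤ K, and M₂(λ) with entries M₂_{i,j} = λ_i^{j−1} for 1 ≤ j ≤ K−q and M₂_{i,j} = F_m(ω_{j−(K−q)}·λ_i) for K−q < j ≤ K. Then ∫_{[0,∞)^K} det M₂(λ) · det M₁(λ) · Π_{i=1}^K λ_i^m e^{−λ_i} dλ = K! · det C, where C is the K×K matrix whose (i,j) entry equals: (m+i+j−2)! if i ≤ K−q and j ≤ K−r; Σ_{n=0}^K binom(K,n)·(m+i+n−1)!·γ_{j−(K−r)}^n if i ≤ K−q and j > K−r; b_m(j−1, ω_{i−(K−q)}) if i > K−q and j ≤ K−r; and Σ_{n=0}^K binom(K,n)·b_m(n, ω_{i−(K−q)})·γ_{j−(K−r)}^n if i > K−q and j > K−r. -/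
open MeasureTheory

namespace Stmt8Aux

lemma integrableOn_pow_exp (n : ℕ) :
    IntegrableOn (fun x : ℝ => x ^ n * Real.exp (-x)) (Set.Ici 0) := by
  rw [integrableOn_Ici_iff_integrableOn_Ioi]
  have h := Real.GammaIntegral_convergent (s := (n : ℝ) + 1) (by positivity)
  refine h.congr_fun (fun x hx => ?_) measurableSet_Ioi
  have hx0 : (0 : ℝ) < x := hx
  beta_reduce
  rw [add_sub_cancel_right, Real.rpow_natCast, mul_comm]

lemma integral_pow_exp (n : ℕ) :
    ∫ x in Set.Ici (0:ℝ), x ^ n * Real.exp (-x) = n.factorial := by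
  rw [MeasureTheory.integral_Ici_eq_integral_Ioi]
  have h := Real.Gamma_eq_integral (s := (n : ℝ) + 1) (by positivity)
  rw [Real.Gamma_nat_eq_factorial] at h
  rw [h]
  refine setIntegral_congr_fun measurableSet_Ioi fun x hx => ?_
  have hx0 : (0 : ℝ) < x := hx
  rw [add_sub_cancel_right, Real.rpow_natCast, mul_comm]

lemma F_summable (m : ℕ) (y : ℝ) :
    Summable (fun k : ℕ => ((m.factorial : ℝ) / ((m + k).factorial * k.factorial)) * y ^ k) := by
  refine Summable.of_norm_bounded (Real.summable_pow_div_factorial |y|) (fun k => ?_)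
  rw [norm_mul, norm_pow, Real.norm_eq_abs, Real.norm_eq_abs, abs_of_nonneg (by positivity)]
  rw [div_mul_eq_mul_div, div_le_div_iff₀ (by positivity) (by positivity)]
  have h1 : (m.factorial : ℝ) ≤ (m + k).factorial := by
    exact_mod_cast Nat.factorial_le (Nat.le_add_right m k)
  calc (m.factorial : ℝ) * |y| ^ k * k.factorial
      ≤ ((m+k).factorial : ℝ) * |y| ^ k * k.factorial := by
        gcongr
    _ = |y| ^ k * (((m+k).factorial : ℝ) * k.factorial) := by ring

lemma F_hasSum (m : ℕ) (y : ℝ) :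
    HasSum (fun k : ℕ => ((m.factorial : ℝ) / ((m + k).factorial * k.factorial)) * y ^ k) (F m y) :=
  (F_summable m y).hasSum

lemma F_stronglyMeasurable (m : ℕ) : StronglyMeasurable (F m) := by
  refine stronglyMeasurable_of_tendsto (f := fun N (y : ℝ) =>
    ∑ k ∈ Finset.range N, ((m.factorial : ℝ) / ((m + k).factorial * k.factorial)) * y ^ k)
    Filter.atTop (fun N => ?_) ?_
  · exact (by continuity : Continuous _).stronglyMeasurable
  · rw [tendsto_pi_nhds]
    exact fun y => (F_hasSum m y).tendsto_sum_nat

lemma choose_le_two_pow (N n : ℕ) : N.choose n ≤ 2 ^ N := by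
  rcases le_or_gt n N with h | h
  · calc N.choose n ≤ ∑ i ∈ Finset.range (N + 1), N.choose i :=
        Finset.single_le_sum (fun i _ => Nat.zero_le _) (Finset.mem_range.mpr (by omega))
      _ = 2 ^ N := Nat.sum_range_choose N
  · rw [Nat.choose_eq_zero_of_lt h]; positivity


noncomputable def A (m n k : ℕ) : ℝ :=
  ((n.factorial : ℝ) * (m + n).factorial * m.factorial /
      ((n - k).factorial * k.factorial * (m + k).factorial))

lemma fact_ne (j : ℕ) : ((j.factorial : ℝ)) ≠ 0 :=
  Nat.cast_ne_zero.mpr (Nat.factorial_ne_zero j)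

lemma fact_pos (j : ℕ) : (0:ℝ) < (j.factorial : ℝ) :=
  Nat.cast_pos.mpr (Nat.factorial_pos j)

lemma coeffI (m n p k : ℕ) (hk : k ≤ n) :
    (if k ≤ p then A m n k / (p - k).factorial else 0)
      = ((m.factorial : ℝ) * n.factorial / p.factorial) *
        ((p.choose k * (m + n).choose (n - k) : ℕ) : ℝ) := by
  rcases le_or_gt k p with hkp | hkp
  · rw [if_pos hkp]
    have e1 := Nat.choose_mul_factorial_mul_factorial hkp
    have e2 := Nat.choose_mul_factorial_mul_factorial (show n - k ≤ m + n by omega)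
    rw [show m + n - (n - k) = m + k by omega] at e2
    have natkey : n.factorial * (m + n).factorial * m.factorial * p.factorial
        = m.factorial * n.factorial * (p.choose k * (m + n).choose (n - k)) *
          ((n - k).factorial * k.factorial * (m + k).factorial * (p - k).factorial) := by
      rw [← e1, ← e2]; ring
    rw [A, div_div, div_mul_eq_mul_div, div_eq_div_iff (by positivity) (fact_pos p).ne']
    exact_mod_cast natkey
  · rw [if_neg (by omega), Nat.choose_eq_zero_of_lt hkp]
    simp

lemma coeffII (m n p : ℕ) :
    ((m.factorial : ℝ) * (p + (m + n)).factorial / ((m + p).factorial * p.factorial))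
      = ((m.factorial : ℝ) * n.factorial / p.factorial) *
        (((p + (m + n)).choose n : ℕ) : ℝ) := by
  have e := Nat.choose_mul_factorial_mul_factorial (show n ≤ p + (m + n) by omega)
  rw [show p + (m + n) - n = m + p by omega] at e
  have natkey : m.factorial * (p + (m + n)).factorial * p.factorial
      = m.factorial * n.factorial * ((p + (m + n)).choose n) *
        ((m + p).factorial * p.factorial) := by
    rw [← e]; ring
  rw [div_mul_eq_mul_div, div_eq_div_iff (by positivity) (fact_pos p).ne']
  exact_mod_cast natkey

lemma vandermonde (m n p : ℕ) :
    ∑ k ∈ Finset.range (n + 1), p.choose k * (m + n).choose (n - k)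
      = (p + (m + n)).choose n := by
  rw [Nat.add_choose_eq]
  exact (Finset.Nat.sum_antidiagonal_eq_sum_range_succ_mk
    (fun ij => p.choose ij.1 * (m + n).choose ij.2) n).symm

lemma coeff_sum (m n p : ℕ) :
    ∑ k ∈ Finset.range (n + 1), (if k ≤ p then A m n k / (p - k).factorial else 0)
      = (m.factorial : ℝ) * (p + (m + n)).factorial / ((m + p).factorial * p.factorial) := by
  calc ∑ k ∈ Finset.range (n + 1), (if k ≤ p then A m n k / (p - k).factorial else 0)
      = ∑ k ∈ Finset.range (n + 1), ((m.factorial : ℝ) * n.factorial / p.factorial) *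
          ((p.choose k * (m + n).choose (n - k) : ℕ) : ℝ) :=
        Finset.sum_congr rfl fun k hk =>
          coeffI m n p k (Nat.lt_succ_iff.mp (Finset.mem_range.mp hk))
    _ = ((m.factorial : ℝ) * n.factorial / p.factorial) *
          (((∑ k ∈ Finset.range (n + 1), p.choose k * (m + n).choose (n - k) : ℕ)) : ℝ) := by
        rw [← Finset.mul_sum]; norm_cast
    _ = _ := by rw [vandermonde]; exact (coeffII m n p).symm

lemma tsum_c_eq_b (m n : ℕ) (ω : ℝ) :
    ∑' p : ℕ, ((m.factorial : ℝ) * ((p + (m + n)).factorial) /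
        ((m + p).factorial * p.factorial)) * ω ^ p = b m n ω := by
  have hexp : Real.exp ω = ∑' l : ℕ, ω ^ l / l.factorial := by
    rw [Real.exp_eq_exp_ℝ, NormedSpace.exp_eq_tsum_div]
  have hb : b m n ω = Real.exp ω * ∑ k ∈ Finset.range (n + 1), A m n k * ω ^ k := rfl
  have hsum : ∀ k : ℕ, Summable (fun l : ℕ => A m n k * ω ^ (k + l) / l.factorial) := by
    intro k
    have heq : (fun l : ℕ => A m n k * ω ^ (k + l) / l.factorial)
        = fun l : ℕ => (A m n k * ω ^ k) * (ω ^ l / l.factorial) := by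
      funext l; rw [pow_add]; ring
    rw [heq]
    exact (Real.summable_pow_div_factorial ω).mul_left _
  have hsupp : ∀ k : ℕ, Function.support (fun p : ℕ =>
      if k ≤ p then A m n k * ω ^ p / (p - k).factorial else 0) ⊆
      Set.range (fun l : ℕ => l + k) := by
    intro k p hp
    have hkp : k ≤ p := by by_contra h; exact hp (if_neg h)
    exact ⟨p - k, by show p - k + k = p; omega⟩
  have hcomp : ∀ k : ℕ, ((fun p : ℕ =>
      if k ≤ p then A m n k * ω ^ p / (p - k).factorial else 0) ∘ (fun l : ℕ => l + k))
      = fun l : ℕ => A m n k * ω ^ (k + l) / l.factorial := by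
    intro k; funext l
    show (if k ≤ l + k then A m n k * ω ^ (l + k) / ((l + k) - k).factorial else 0) = _
    rw [if_pos (by omega), show l + k - k = l from by omega, show l + k = k + l from by omega]
  have hD : ∀ k : ℕ, Summable (fun p : ℕ =>
      if k ≤ p then A m n k * ω ^ p / (p - k).factorial else 0) := by
    intro k
    refine (Function.Injective.summable_iff (add_left_injective k) ?_).mp ?_
    · intro p hp
      by_contra h
      exact hp (hsupp k (by simpa using h))
    · rw [hcomp k]; exact hsum k
  symm
  calc b m n ω
      = ∑ k ∈ Finset.range (n + 1), ∑' l : ℕ, A m n k * ω ^ (k + l) / l.factorial := by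
        rw [hb, Finset.mul_sum]
        refine Finset.sum_congr rfl fun k _ => ?_
        rw [hexp, mul_comm, ← tsum_mul_left]
        apply tsum_congr; intro l
        rw [pow_add]; ring
    _ = ∑ k ∈ Finset.range (n + 1), ∑' p : ℕ,
          (if k ≤ p then A m n k * ω ^ p / (p - k).factorial else 0) := by
        refine Finset.sum_congr rfl fun k _ => ?_
        rw [← Function.Injective.tsum_eq (add_left_injective k) (hsupp k)]
        refine tsum_congr fun l => ?_
        show A m n k * ω ^ (k + l) / ↑l.factorial
          = if k ≤ l + k then A m n k * ω ^ (l + k) / ((l + k) - k).factorial else 0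
        rw [if_pos (by omega : k ≤ l + k), show l + k - k = l from by omega,
          show l + k = k + l from by omega]
    _ = ∑' p : ℕ, ∑ k ∈ Finset.range (n + 1),
          (if k ≤ p then A m n k * ω ^ p / (p - k).factorial else 0) :=
        (Summable.tsum_finsetSum (fun k _ => hD k)).symm
    _ = ∑' p : ℕ, ((m.factorial : ℝ) * ((p + (m + n)).factorial) /
          ((m + p).factorial * p.factorial)) * ω ^ p := by
        apply tsum_congr; intro p
        have h : ∀ k, (if k ≤ p then A m n k * ω ^ p / (p - k).factorial else 0)
            = (if k ≤ p then A m n k / (p - k).factorial else 0) * ω ^ p := by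
          intro k; split <;> ring
        rw [Finset.sum_congr rfl (fun k _ => h k), ← Finset.sum_mul, coeff_sum]


lemma key (m n : ℕ) {ω : ℝ} (hω : 0 ≤ ω) :
    IntegrableOn (fun x => F m (ω * x) * (x ^ (m + n) * Real.exp (-x))) (Set.Ici 0) ∧
    ∫ x in Set.Ici (0:ℝ), F m (ω * x) * (x ^ (m + n) * Real.exp (-x)) = b m n ω := by
  set μ := (volume : Measure ℝ).restrict (Set.Ici 0) with hμ
  set c : ℕ → ℝ := fun k => (m.factorial : ℝ) / ((m + k).factorial * k.factorial) with hc
  set fk : ℕ → ℝ → ℝ := fun k x => c k * (ω * x) ^ k * (x ^ (m + n) * Real.exp (-x)) with hfk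
  have hfk_eq : ∀ k, fk k = fun x => (c k * ω ^ k) * (x ^ (k + (m + n)) * Real.exp (-x)) := by
    intro k; funext x; simp only [hfk, mul_pow, pow_add]; ring
  have hck : ∀ k, 0 ≤ c k := fun k => by rw [hc]; positivity
  have h_int : ∀ k, Integrable (fk k) μ := by
    intro k; rw [hfk_eq]
    exact (integrableOn_pow_exp (k + (m + n))).const_mul _
  have h_val : ∀ k, ∫ x, fk k x ∂μ = (c k * ω ^ k) * ((k + (m + n)).factorial : ℝ) := by
    intro k
    rw [hfk_eq, integral_const_mul, hμ, integral_pow_exp]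
  have hfk_nonneg : ∀ k, ∀ x ∈ Set.Ici (0:ℝ), 0 ≤ fk k x := by
    intro k x hx
    exact mul_nonneg (mul_nonneg (hck k) (pow_nonneg (mul_nonneg hω hx) k))
      (mul_nonneg (pow_nonneg hx _) (Real.exp_pos _).le)
  have h_norm : ∀ k, ∫ x, ‖fk k x‖ ∂μ = (c k * ω ^ k) * ((k + (m + n)).factorial : ℝ) := by
    intro k
    rw [← h_val k, hμ]
    exact setIntegral_congr_fun measurableSet_Ici fun x hx =>
      Real.norm_of_nonneg (hfk_nonneg k x hx)
  -- summability of the values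
  have h_csummable : Summable (fun k => (c k * ω ^ k) * ((k + (m + n)).factorial : ℝ)) := by
    refine Summable.of_nonneg_of_le
      (fun k => mul_nonneg (mul_nonneg (hck k) (pow_nonneg hω k)) (Nat.cast_nonneg _))
      (fun k => ?_)
      (((Real.summable_pow_div_factorial (2 * ω)).mul_left
        ((m.factorial : ℝ) * n.factorial * 2 ^ (m + n))))
    have hch := Nat.choose_mul_factorial_mul_factorial (show n ≤ k + (m + n) by omega)
    rw [show k + (m + n) - n = m + k by omega] at hch
    have hch' : (((k + (m + n)).choose n : ℕ) : ℝ) * n.factorial * (m + k).factorial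
        = ((k + (m + n)).factorial : ℝ) := by exact_mod_cast congrArg (Nat.cast (R := ℝ)) hch
    have hterm : (c k * ω ^ k) * ((k + (m + n)).factorial : ℝ)
        = ((m.factorial : ℝ) * n.factorial * ((k + (m + n)).choose n : ℕ)) *
          (ω ^ k / k.factorial) := by
      rw [hc, ← hch']
      field_simp
    rw [hterm]
    have hC : (((k + (m + n)).choose n : ℕ) : ℝ) ≤ 2 ^ (m + n) * 2 ^ k := by
      have h1 : (k + (m + n)).choose n ≤ 2 ^ (m + n) * 2 ^ k := by
        calc (k + (m + n)).choose n ≤ 2 ^ (k + (m + n)) := choose_le_two_pow _ _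
          _ = 2 ^ (m + n) * 2 ^ k := by rw [pow_add]; ring
      exact_mod_cast h1
    calc ((m.factorial : ℝ) * n.factorial * ((k + (m + n)).choose n : ℕ)) *
          (ω ^ k / k.factorial)
        ≤ ((m.factorial : ℝ) * n.factorial * (2 ^ (m + n) * 2 ^ k)) *
          (ω ^ k / k.factorial) := by
          apply mul_le_mul_of_nonneg_right _ (by positivity)
          apply mul_le_mul_of_nonneg_left hC (by positivity)
      _ = ((m.factorial : ℝ) * n.factorial * 2 ^ (m + n)) * ((2 * ω) ^ k / k.factorial) := by
          rw [mul_pow]; ring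
  have h_norm_summable : Summable (fun k => ∫ x, ‖fk k x‖ ∂μ) := by
    refine h_csummable.congr fun k => (h_norm k).symm
  -- pointwise tsum identity
  have h_ptwise : ∀ x : ℝ, ∑' k, fk k x = F m (ω * x) * (x ^ (m + n) * Real.exp (-x)) := by
    intro x
    rw [F, ← tsum_mul_right]
  have h_eq2 : ∑' k, ∫ x, fk k x ∂μ = b m n ω := by
    rw [← tsum_c_eq_b m n ω]
    apply tsum_congr; intro k
    rw [h_val k]
    simp only [hc]
    ring
  -- strong measurability of the limit
  have hsm : AEStronglyMeasurable
      (fun x => F m (ω * x) * (x ^ (m + n) * Real.exp (-x))) μ := by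
    refine StronglyMeasurable.aestronglyMeasurable ?_
    have h1 : StronglyMeasurable (fun x : ℝ => F m (ω * x)) :=
      (F_stronglyMeasurable m).comp_measurable (measurable_const_mul ω)
    exact h1.mul (Continuous.stronglyMeasurable (by continuity))
  -- integrability
  have hptsummable : ∀ x ∈ Set.Ici (0:ℝ), Summable (fun k => fk k x) := by
    intro x _
    have := (F_summable m (ω * x)).mul_right (x ^ (m + n) * Real.exp (-x))
    exact this
  have hint : Integrable (fun x => F m (ω * x) * (x ^ (m + n) * Real.exp (-x))) μ := by
    refine ⟨hsm, ?_⟩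
    rw [hasFiniteIntegral_iff_norm]
    have hbound : ∫⁻ x, ENNReal.ofReal ‖F m (ω * x) * (x ^ (m + n) * Real.exp (-x))‖ ∂μ
        = ∑' k, ∫⁻ x, ENNReal.ofReal (fk k x) ∂μ := by
      rw [← lintegral_tsum (fun k => ((h_int k).1.aemeasurable.ennreal_ofReal))]
      apply lintegral_congr_ae
      filter_upwards [ae_restrict_mem measurableSet_Ici] with x hx
      rw [Real.norm_of_nonneg (by
        rw [← h_ptwise x]; exact tsum_nonneg fun k => hfk_nonneg k x hx)]
      rw [← h_ptwise x, ENNReal.ofReal_tsum_of_nonneg (fun k => hfk_nonneg k x hx)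
        (hptsummable x hx)]
    rw [hbound]
    have hval' : ∀ k, ∫⁻ x, ENNReal.ofReal (fk k x) ∂μ
        = ENNReal.ofReal ((c k * ω ^ k) * ((k + (m + n)).factorial : ℝ)) := by
      intro k
      rw [← h_val k, ← ofReal_integral_eq_lintegral_ofReal (h_int k)]
      filter_upwards [ae_restrict_mem measurableSet_Ici] with x hx using hfk_nonneg k x hx
    simp_rw [hval']
    rw [← ENNReal.ofReal_tsum_of_nonneg
      (fun k => mul_nonneg (mul_nonneg (hck k) (pow_nonneg hω k)) (Nat.cast_nonneg _))
      h_csummable]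
    exact ENNReal.ofReal_lt_top
  refine ⟨hint, ?_⟩
  rw [← h_eq2, hμ]
  rw [integral_tsum_of_summable_integral_norm h_int h_norm_summable]
  exact integral_congr_ae (Filter.Eventually.of_forall fun x => (h_ptwise x).symm)


lemma binom_expand (K : ℕ) (γ x : ℝ) :
    (1 + γ * x) ^ K = ∑ n ∈ Finset.range (K + 1), (K.choose n : ℝ) * γ ^ n * x ^ n := by
  rw [add_comm, add_pow]
  refine Finset.sum_congr rfl fun n _ => ?_
  rw [one_pow, mul_pow]; ring

lemma E1 (m i j : ℕ) :
    IntegrableOn (fun x : ℝ => x ^ i * x ^ j * (x ^ m * Real.exp (-x))) (Set.Ici 0) ∧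
    ∫ x in Set.Ici (0:ℝ), x ^ i * x ^ j * (x ^ m * Real.exp (-x))
      = ((m + i + j).factorial : ℝ) := by
  have hfun : (fun x : ℝ => x ^ i * x ^ j * (x ^ m * Real.exp (-x)))
      = fun x : ℝ => x ^ (m + i + j) * Real.exp (-x) := by
    funext x; rw [pow_add, pow_add]; ring
  rw [hfun]
  exact ⟨integrableOn_pow_exp _, integral_pow_exp _⟩

lemma E2 (m i K : ℕ) (γ : ℝ) :
    IntegrableOn (fun x : ℝ => x ^ i * (1 + γ * x) ^ K * (x ^ m * Real.exp (-x)))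
      (Set.Ici 0) ∧
    ∫ x in Set.Ici (0:ℝ), x ^ i * (1 + γ * x) ^ K * (x ^ m * Real.exp (-x))
      = ∑ n ∈ Finset.range (K + 1),
          (K.choose n : ℝ) * ((m + i + n).factorial : ℝ) * γ ^ n := by
  have hfun : (fun x : ℝ => x ^ i * (1 + γ * x) ^ K * (x ^ m * Real.exp (-x)))
      = fun x : ℝ => ∑ n ∈ Finset.range (K + 1),
          ((K.choose n : ℝ) * γ ^ n) * (x ^ (m + i + n) * Real.exp (-x)) := by
    funext x
    rw [binom_expand, Finset.mul_sum, Finset.sum_mul]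
    refine Finset.sum_congr rfl fun n _ => ?_
    rw [pow_add, pow_add]; ring
  rw [hfun]
  constructor
  · exact integrable_finset_sum _ fun n _ => (integrableOn_pow_exp (m + i + n)).const_mul _
  · rw [integral_finset_sum _ fun n _ => (integrableOn_pow_exp (m + i + n)).const_mul _]
    refine Finset.sum_congr rfl fun n _ => ?_
    rw [integral_const_mul, integral_pow_exp]
    ring

lemma E3 (m j : ℕ) {ω : ℝ} (hω : 0 ≤ ω) :
    IntegrableOn (fun x : ℝ => F m (ω * x) * x ^ j * (x ^ m * Real.exp (-x)))
      (Set.Ici 0) ∧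
    ∫ x in Set.Ici (0:ℝ), F m (ω * x) * x ^ j * (x ^ m * Real.exp (-x)) = b m j ω := by
  have hfun : (fun x : ℝ => F m (ω * x) * x ^ j * (x ^ m * Real.exp (-x)))
      = fun x : ℝ => F m (ω * x) * (x ^ (m + j) * Real.exp (-x)) := by
    funext x; rw [pow_add]; ring
  rw [hfun]
  exact key m j hω

lemma E4 (m K : ℕ) {ω : ℝ} (hω : 0 ≤ ω) (γ : ℝ) :
    IntegrableOn (fun x : ℝ => F m (ω * x) * (1 + γ * x) ^ K * (x ^ m * Real.exp (-x)))
      (Set.Ici 0) ∧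
    ∫ x in Set.Ici (0:ℝ), F m (ω * x) * (1 + γ * x) ^ K * (x ^ m * Real.exp (-x))
      = ∑ n ∈ Finset.range (K + 1), (K.choose n : ℝ) * b m n ω * γ ^ n := by
  have hfun : (fun x : ℝ => F m (ω * x) * (1 + γ * x) ^ K * (x ^ m * Real.exp (-x)))
      = fun x : ℝ => ∑ n ∈ Finset.range (K + 1),
          ((K.choose n : ℝ) * γ ^ n) * (F m (ω * x) * (x ^ (m + n) * Real.exp (-x))) := by
    funext x
    rw [binom_expand, Finset.mul_sum, Finset.sum_mul]
    refine Finset.sum_congr rfl fun n _ => ?_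
    rw [pow_add]; ring
  rw [hfun]
  constructor
  · exact integrable_finset_sum _ fun n _ => ((key m n hω).1).const_mul _
  · rw [integral_finset_sum _ fun n _ => ((key m n hω).1).const_mul _]
    refine Finset.sum_congr rfl fun n _ => ?_
    rw [integral_const_mul, (key m n hω).2]
    ring


open Equiv in
lemma andreief {K : ℕ} (f g : Fin K → ℝ → ℝ) (w : ℝ → ℝ)
    (hint : ∀ i j, IntegrableOn (fun x => f i x * g j x * w x) (Set.Ici 0)) :
    (∫ lam : Fin K → ℝ in Set.univ.pi fun _ => Set.Ici (0 : ℝ),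
        (Matrix.of fun i j : Fin K => f j (lam i)).det *
        (Matrix.of fun i j : Fin K => g j (lam i)).det *
        ∏ i, w (lam i)
        ∂(Measure.pi fun _ => (volume : Measure ℝ)))
      = (K.factorial : ℝ) *
        (Matrix.of fun i j : Fin K => ∫ x in Set.Ici (0:ℝ), f i x * g j x * w x).det := by
  classical
  set S : Set (Fin K → ℝ) := Set.univ.pi fun _ => Set.Ici (0 : ℝ) with hSdef
  have hS : MeasurableSet S := MeasurableSet.univ_pi fun _ => measurableSet_Ici
  set C : Matrix (Fin K) (Fin K) ℝ :=
    Matrix.of fun i j : Fin K => ∫ x in Set.Ici (0:ℝ), f i x * g j x * w x with hC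
  -- product-integral helper
  have prodint : ∀ h : Fin K → ℝ → ℝ, (∀ i, IntegrableOn (h i) (Set.Ici 0)) →
      IntegrableOn (fun lam : Fin K → ℝ => ∏ i, h i (lam i)) S
        (Measure.pi fun _ => (volume : Measure ℝ)) ∧
      (∫ lam in S, ∏ i, h i (lam i) ∂(Measure.pi fun _ => (volume : Measure ℝ)))
        = ∏ i, ∫ x in Set.Ici (0:ℝ), h i x := by
    intro h hh
    have hind : (fun lam : Fin K → ℝ => ∏ i, (Set.Ici (0:ℝ)).indicator (h i) (lam i))
        = S.indicator fun lam => ∏ i, h i (lam i) := by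
      funext lam
      by_cases hl : lam ∈ S
      · rw [Set.indicator_of_mem hl]
        exact Finset.prod_congr rfl fun i _ =>
          Set.indicator_of_mem (hl i (Set.mem_univ i)) (h i)
      · rw [Set.indicator_of_notMem hl]
        rw [hSdef, Set.mem_univ_pi] at hl
        push_neg at hl
        obtain ⟨i, hi⟩ := hl
        exact Finset.prod_eq_zero (Finset.mem_univ i) (Set.indicator_of_notMem hi (h i))
    have h1 : ∀ i, Integrable ((Set.Ici (0:ℝ)).indicator (h i)) volume := fun i =>
      (integrable_indicator_iff measurableSet_Ici).mpr (hh i)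
    have h2 : Integrable
        (fun lam : Fin K → ℝ => ∏ i, (Set.Ici (0:ℝ)).indicator (h i) (lam i)) volume :=
      Integrable.fintype_prod h1
    constructor
    · rw [← MeasureTheory.volume_pi, ← integrable_indicator_iff hS, ← hind]
      exact h2
    · rw [← MeasureTheory.volume_pi, ← integral_indicator hS, ← hind, MeasureTheory.volume_pi,
        MeasureTheory.integral_fintype_prod_eq_prod (ι := Fin K)
          (fun i => (Set.Ici (0:ℝ)).indicator (h i))]
      exact Finset.prod_congr rfl fun i _ => integral_indicator measurableSet_Ici
  have Hστ : ∀ σ τ : Perm (Fin K),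
      IntegrableOn (fun lam : Fin K → ℝ =>
        ∏ i, (f (σ i) (lam i) * g (τ i) (lam i) * w (lam i))) S
        (Measure.pi fun _ => (volume : Measure ℝ)) :=
    fun σ τ => (prodint _ fun i => hint (σ i) (τ i)).1
  -- pointwise expansion
  have hexp : (fun lam : Fin K → ℝ =>
      (Matrix.of fun i j : Fin K => f j (lam i)).det *
      (Matrix.of fun i j : Fin K => g j (lam i)).det * ∏ i, w (lam i))
      = fun lam : Fin K → ℝ => ∑ σ : Perm (Fin K), ∑ τ : Perm (Fin K),
          (((Perm.sign σ : ℤ) : ℝ) * ((Perm.sign τ : ℤ) : ℝ)) *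
          ∏ i, (f (σ i) (lam i) * g (τ i) (lam i) * w (lam i)) := by
    funext lam
    rw [← Matrix.det_transpose (Matrix.of fun i j : Fin K => f j (lam i)),
      ← Matrix.det_transpose (Matrix.of fun i j : Fin K => g j (lam i)),
      Matrix.det_apply', Matrix.det_apply']
    simp only [Matrix.transpose_apply, Matrix.of_apply]
    rw [Finset.sum_mul_sum, Finset.sum_mul]
    refine Finset.sum_congr rfl fun σ _ => ?_
    rw [Finset.sum_mul]
    refine Finset.sum_congr rfl fun τ _ => ?_
    rw [Finset.prod_mul_distrib, Finset.prod_mul_distrib]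
    ring
  rw [hexp]
  rw [integral_finset_sum _ fun σ _ => integrable_finset_sum _ fun τ _ =>
    (Hστ σ τ).const_mul _]
  have hsign : ∀ σ : Perm (Fin K),
      ((Perm.sign σ : ℤ) : ℝ) * ((Perm.sign σ : ℤ) : ℝ) = 1 := by
    intro σ
    rcases Int.units_eq_one_or (Perm.sign σ) with h | h <;> rw [h] <;> norm_num
  have hdet : Matrix.det C = ∑ π : Perm (Fin K),
      ((Perm.sign π : ℤ) : ℝ) * ∏ i, C i (π i) := by
    rw [← Matrix.det_transpose C, Matrix.det_apply']
    simp only [Matrix.transpose_apply]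
  calc ∑ σ : Perm (Fin K), ∫ lam in S, ∑ τ : Perm (Fin K),
        (((Perm.sign σ : ℤ) : ℝ) * ((Perm.sign τ : ℤ) : ℝ)) *
        ∏ i, (f (σ i) (lam i) * g (τ i) (lam i) * w (lam i))
        ∂(Measure.pi fun _ => (volume : Measure ℝ))
      = ∑ σ : Perm (Fin K), ∑ τ : Perm (Fin K),
        (((Perm.sign σ : ℤ) : ℝ) * ((Perm.sign τ : ℤ) : ℝ)) * ∏ i, C (σ i) (τ i) := by
        refine Finset.sum_congr rfl fun σ _ => ?_
        rw [integral_finset_sum _ fun τ _ => (Hστ σ τ).const_mul _]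
        refine Finset.sum_congr rfl fun τ _ => ?_
        rw [integral_const_mul, (prodint _ fun i => hint (σ i) (τ i)).2]
        rfl
    _ = ∑ _σ : Perm (Fin K), Matrix.det C := by
        refine Finset.sum_congr rfl fun σ _ => ?_
        rw [← Equiv.sum_comp (Equiv.mulRight σ) (fun τ =>
          (((Perm.sign σ : ℤ) : ℝ) * ((Perm.sign τ : ℤ) : ℝ)) * ∏ i, C (σ i) (τ i))]
        rw [hdet]
        refine Finset.sum_congr rfl fun π _ => ?_
        simp only [Equiv.coe_mulRight, Equiv.Perm.mul_apply]
        rw [← Equiv.prod_comp σ (fun j => C j (π j))]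
        have hs : ((Perm.sign (π * σ) : ℤ) : ℝ)
            = ((Perm.sign π : ℤ) : ℝ) * ((Perm.sign σ : ℤ) : ℝ) := by
          rw [map_mul]; push_cast; ring
        rw [hs, show ((Perm.sign σ : ℤ) : ℝ) * (((Perm.sign π : ℤ) : ℝ) *
            ((Perm.sign σ : ℤ) : ℝ)) * ∏ i, C (σ i) (π (σ i))
          = (((Perm.sign σ : ℤ) : ℝ) * ((Perm.sign σ : ℤ) : ℝ)) *
            (((Perm.sign π : ℤ) : ℝ) * ∏ i, C (σ i) (π (σ i))) from by ring,
          hsign σ, one_mul]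
    _ = (K.factorial : ℝ) * Matrix.det C := by
        rw [Finset.sum_const, Finset.card_univ, Fintype.card_perm, Fintype.card_fin,
          nsmul_eq_mul]

end Stmt8Aux

open Stmt8Aux in
/-- Evaluation of the integral `ℱ_1^{(1)}` (equation (41)) in Appendix A of the paper:
`∫_{[0,∞)^K} det M₂(λ) · det M₁(λ) · ∏ λ_i^m e^{-λ_i} dλ = K! det C`
(stated with 0-based indices). -/
theorem stmt8 (m K q r : ℕ) (hq : q ≤ K) (hr : r ≤ K) (hK : 1 ≤ K)
    (ω : Fin q → ℝ) (hω : ∀ i, 0 ≤ ω i) (γ : Fin r → ℝ) (hγ : ∀ i, 0 < γ i) :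
    (∫ lam : Fin K → ℝ in Set.univ.pi fun _ => Set.Ici (0 : ℝ),
        (Matrix.of fun i j : Fin K =>
          if h : (j : ℕ) < K - q then lam i ^ (j : ℕ)
          else F m (ω ⟨(j : ℕ) - (K - q), by have := j.isLt; omega⟩ * lam i)).det *
        (Matrix.of fun i j : Fin K =>
          if h : (j : ℕ) < K - r then lam i ^ (j : ℕ)
          else (1 + γ ⟨(j : ℕ) - (K - r), by have := j.isLt; omega⟩ * lam i) ^ K).det *
        ∏ i, lam i ^ m * Real.exp (-(lam i))
        ∂(Measure.pi fun _ => (volume : Measure ℝ)))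
      = (K.factorial : ℝ) *
        (Matrix.of fun i j : Fin K =>
          if hi : (i : ℕ) < K - q then
            if hj : (j : ℕ) < K - r then ((m + (i : ℕ) + (j : ℕ)).factorial : ℝ)
            else ∑ n ∈ Finset.range (K + 1),
              (K.choose n : ℝ) * ((m + (i : ℕ) + n).factorial : ℝ) *
                γ ⟨(j : ℕ) - (K - r), by have := j.isLt; omega⟩ ^ n
          else
            if hj : (j : ℕ) < K - r then
              b m (j : ℕ) (ω ⟨(i : ℕ) - (K - q), by have := i.isLt; omega⟩)
            else ∑ n ∈ Finset.range (K + 1),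
              (K.choose n : ℝ) * b m n (ω ⟨(i : ℕ) - (K - q), by have := i.isLt; omega⟩) *
                γ ⟨(j : ℕ) - (K - r), by have := j.isLt; omega⟩ ^ n).det := by
  classical
  set w : ℝ → ℝ := fun x => x ^ m * Real.exp (-x) with hw
  set f : Fin K → ℝ → ℝ := fun j =>
    if h : (j : ℕ) < K - q then fun x => x ^ (j : ℕ)
    else fun x => F m (ω ⟨(j : ℕ) - (K - q), by have := j.isLt; omega⟩ * x) with hf
  set g : Fin K → ℝ → ℝ := fun j =>
    if h : (j : ℕ) < K - r then fun x => x ^ (j : ℕ)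
    else fun x => (1 + γ ⟨(j : ℕ) - (K - r), by have := j.isLt; omega⟩ * x) ^ K with hg
  have hfpos : ∀ (j : Fin K) (h : (j : ℕ) < K - q), f j = fun x => x ^ (j : ℕ) := by
    intro j h; rw [hf]; exact dif_pos h
  have hfneg : ∀ (j : Fin K) (h : ¬ (j : ℕ) < K - q),
      f j = fun x => F m (ω ⟨(j : ℕ) - (K - q), by have := j.isLt; omega⟩ * x) := by
    intro j h; rw [hf]; exact dif_neg h
  have hgpos : ∀ (j : Fin K) (h : (j : ℕ) < K - r), g j = fun x => x ^ (j : ℕ) := by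
    intro j h; rw [hg]; exact dif_pos h
  have hgneg : ∀ (j : Fin K) (h : ¬ (j : ℕ) < K - r),
      g j = fun x => (1 + γ ⟨(j : ℕ) - (K - r), by have := j.isLt; omega⟩ * x) ^ K := by
    intro j h; rw [hg]; exact dif_neg h
  have hint : ∀ i j, IntegrableOn (fun x => f i x * g j x * w x) (Set.Ici 0) := by
    intro i j
    by_cases hi : (i : ℕ) < K - q <;> by_cases hj : (j : ℕ) < K - r
    · rw [hfpos i hi, hgpos j hj]; exact (E1 m i j).1
    · rw [hfpos i hi, hgneg j hj]; exact (E2 m i K _).1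
    · rw [hfneg i hi, hgpos j hj]; exact (E3 m j (hω _)).1
    · rw [hfneg i hi, hgneg j hj]; exact (E4 m K (hω _) _).1
  have hS : MeasurableSet (Set.univ.pi fun _ : Fin K => Set.Ici (0:ℝ)) :=
    MeasurableSet.univ_pi fun _ => measurableSet_Ici
  have step1 : (∫ lam : Fin K → ℝ in Set.univ.pi fun _ => Set.Ici (0 : ℝ),
        (Matrix.of fun i j : Fin K =>
          if h : (j : ℕ) < K - q then lam i ^ (j : ℕ)
          else F m (ω ⟨(j : ℕ) - (K - q), by have := j.isLt; omega⟩ * lam i)).det *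
        (Matrix.of fun i j : Fin K =>
          if h : (j : ℕ) < K - r then lam i ^ (j : ℕ)
          else (1 + γ ⟨(j : ℕ) - (K - r), by have := j.isLt; omega⟩ * lam i) ^ K).det *
        ∏ i, lam i ^ m * Real.exp (-(lam i))
        ∂(Measure.pi fun _ => (volume : Measure ℝ)))
      = ∫ lam : Fin K → ℝ in Set.univ.pi fun _ => Set.Ici (0 : ℝ),
        (Matrix.of fun i j : Fin K => f j (lam i)).det *
        (Matrix.of fun i j : Fin K => g j (lam i)).det *
        ∏ i, w (lam i)
        ∂(Measure.pi fun _ => (volume : Measure ℝ)) := by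
    refine setIntegral_congr_fun hS fun lam _ => ?_
    have h2 : (Matrix.of fun i j : Fin K =>
        if h : (j : ℕ) < K - q then lam i ^ (j : ℕ)
        else F m (ω ⟨(j : ℕ) - (K - q), by have := j.isLt; omega⟩ * lam i))
        = Matrix.of fun i j : Fin K => f j (lam i) := by
      ext i j
      simp only [Matrix.of_apply]
      by_cases h : (j : ℕ) < K - q
      · rw [dif_pos h, hfpos j h]
      · rw [dif_neg h, hfneg j h]
    have h1 : (Matrix.of fun i j : Fin K =>
        if h : (j : ℕ) < K - r then lam i ^ (j : ℕ)
        else (1 + γ ⟨(j : ℕ) - (K - r), by have := j.isLt; omega⟩ * lam i) ^ K)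
        = Matrix.of fun i j : Fin K => g j (lam i) := by
      ext i j
      simp only [Matrix.of_apply]
      by_cases h : (j : ℕ) < K - r
      · rw [dif_pos h, hgpos j h]
      · rw [dif_neg h, hgneg j h]
    rw [h1, h2]
  rw [step1, andreief f g w hint]
  congr 1
  congr 1
  ext i j
  simp only [Matrix.of_apply]
  by_cases hi : (i : ℕ) < K - q <;> by_cases hj : (j : ℕ) < K - r
  · rw [dif_pos hi, dif_pos hj, hfpos i hi, hgpos j hj]
    exact (E1 m i j).2
  · rw [dif_pos hi, dif_neg hj, hfpos i hi, hgneg j hj]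
    exact (E2 m i K _).2
  · rw [dif_neg hi, dif_pos hj, hfneg i hi, hgpos j hj]
    exact (E3 m j (hω _)).2
  · rw [dif_neg hi, dif_neg hj, hfneg i hi, hgneg j hj]
    exact (E4 m K (hω _) _).2
end

section
/- Let d, N be natural numbers, i ≥ 1 a natural number, γ ≥ 0 and ω ≥ 0 real numbers. Define the polynomial P(x) = Σ_{n=0}^{N} binom(N, n) · n! · (d!/(d+n)!) · γ^n · x^n. Then: (a) ∫_0^∞ x^{d+i−1} · e^{−x} · P(x) dx = Σ_{n=0}^{N} binom(N, n) · n! · (d!/(d+n)!) · (d+i+n−1)! · γ^n; and (b) ∫_0^∞ x^{d} · e^{−x} · F_d(ω·x) · P(x) dx = Σ_{n=0}^{N} binom(N, n) · n! · (d!/(d+n)!) · γ^n · b_d(n, ω). -/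
open MeasureTheory Set

lemma my_choose_le_two_pow (m n : ℕ) : m.choose n ≤ 2 ^ m := by
  rcases le_or_gt n m with h | h
  · calc m.choose n ≤ ∑ j ∈ Finset.range (m + 1), m.choose j :=
        Finset.single_le_sum (fun _ _ => Nat.zero_le _)
          (Finset.mem_range.mpr (Nat.lt_succ_of_le h))
    _ = 2 ^ m := Nat.sum_range_choose m
  · rw [Nat.choose_eq_zero_of_lt h]
    exact Nat.zero_le _

lemma intOn_pow_exp (m : ℕ) :
    IntegrableOn (fun x : ℝ => x ^ m * Real.exp (-x)) (Set.Ioi 0) := by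
  have h := Real.GammaIntegral_convergent (s := (m : ℝ) + 1) (by positivity)
  refine h.congr_fun (fun x hx => ?_) measurableSet_Ioi
  beta_reduce
  rw [add_sub_cancel_right, Real.rpow_natCast, mul_comm]

lemma int_pow_exp (m : ℕ) :
    (∫ x in Set.Ioi (0:ℝ), x ^ m * Real.exp (-x)) = (m.factorial : ℝ) := by
  have h := Real.Gamma_eq_integral (s := (m : ℝ) + 1) (by positivity)
  rw [Real.Gamma_nat_eq_factorial] at h
  rw [h]
  refine setIntegral_congr_fun measurableSet_Ioi fun x hx => ?_
  rw [add_sub_cancel_right, Real.rpow_natCast, mul_comm]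

lemma poly_int (m M : ℕ) (c : ℕ → ℝ) :
    IntegrableOn
      (fun x : ℝ => x ^ m * Real.exp (-x) * ∑ n ∈ Finset.range M, c n * x ^ n) (Set.Ioi 0) ∧
    (∫ x in Set.Ioi (0:ℝ), x ^ m * Real.exp (-x) * ∑ n ∈ Finset.range M, c n * x ^ n)
      = ∑ n ∈ Finset.range M, c n * ((m + n).factorial : ℝ) := by
  have hfun : (fun x : ℝ => x ^ m * Real.exp (-x) * ∑ n ∈ Finset.range M, c n * x ^ n)
      = fun x => ∑ n ∈ Finset.range M, c n * (x ^ (m + n) * Real.exp (-x)) := by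
    funext x
    rw [Finset.mul_sum]
    refine Finset.sum_congr rfl fun n _ => ?_
    rw [pow_add]; ring
  have hint : ∀ n ∈ Finset.range M,
      Integrable (fun x : ℝ => c n * (x ^ (m + n) * Real.exp (-x)))
        (volume.restrict (Set.Ioi 0)) := fun n _ => (intOn_pow_exp (m + n)).const_mul _
  constructor
  · rw [hfun]
    exact integrable_finset_sum _ hint
  · rw [hfun, integral_finset_sum _ hint]
    refine Finset.sum_congr rfl fun n _ => ?_
    rw [integral_const_mul, int_pow_exp]

lemma sum_core (d n : ℕ) (ω : ℝ) (hω : 0 ≤ ω) :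
    Summable (fun k : ℕ => (d.factorial : ℝ) / ((d + k).factorial * k.factorial) * ω ^ k *
      ((d + n + k).factorial : ℝ)) := by
  have hb : Summable (fun k : ℕ =>
      ((d.factorial : ℝ) * n.factorial * 2 ^ (d + n)) * ((2 * ω) ^ k / k.factorial)) :=
    (Real.summable_pow_div_factorial (2 * ω)).mul_left _
  refine Summable.of_nonneg_of_le (fun k => ?_) (fun k => ?_) hb
  · exact mul_nonneg (mul_nonneg (by positivity) (pow_nonneg hω k)) (by positivity)
  · have h1 : (d + n + k).choose n * n.factorial * (d + k).factorial
        = (d + n + k).factorial := by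
      have h := Nat.choose_mul_factorial_mul_factorial (show n ≤ d + n + k by omega)
      rwa [show d + n + k - n = d + k by omega] at h
    have h2 : ((d + k).factorial : ℝ) ≠ 0 := Nat.cast_ne_zero.mpr (Nat.factorial_ne_zero _)
    have h3 : ((k).factorial : ℝ) ≠ 0 := Nat.cast_ne_zero.mpr (Nat.factorial_ne_zero _)
    calc (d.factorial : ℝ) / ((d + k).factorial * k.factorial) * ω ^ k *
          ((d + n + k).factorial : ℝ)
        = (d.factorial : ℝ) * n.factorial * ((d + n + k).choose n)
            * (ω ^ k / k.factorial) := by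
          rw [← h1]
          push_cast
          field_simp
      _ ≤ (d.factorial : ℝ) * n.factorial * (2 ^ (d + n) * 2 ^ k) * (ω ^ k / k.factorial) := by
          have hC : (((d + n + k).choose n : ℕ) : ℝ) ≤ 2 ^ (d + n) * 2 ^ k := by
            have h := my_choose_le_two_pow (d + n + k) n
            rw [pow_add] at h
            exact_mod_cast h
          have hnn : 0 ≤ ω ^ k / (k.factorial : ℝ) :=
            div_nonneg (pow_nonneg hω k) (by positivity)
          exact mul_le_mul_of_nonneg_right
            (mul_le_mul_of_nonneg_left hC (by positivity)) hnn
      _ = (d.factorial : ℝ) * n.factorial * 2 ^ (d + n) * ((2 * ω) ^ k / k.factorial) := by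
          rw [mul_pow]; ring

/-- auxiliary doubly-indexed family -/
noncomputable def hjk (d n : ℕ) (ω : ℝ) (j k : ℕ) : ℝ :=
  (if j ≤ k then ((n.factorial : ℝ) * (d + n).factorial * d.factorial) /
      (((n - j).factorial : ℝ) * j.factorial * (d + j).factorial * (k - j).factorial)
    else 0) * ω ^ k

lemma tsum_val (d n : ℕ) (ω : ℝ) :
    (∑' k : ℕ, (d.factorial : ℝ) / ((d + k).factorial * k.factorial) * ω ^ k *
      ((d + n + k).factorial : ℝ)) = b d n ω := by
  have facne : ∀ m : ℕ, ((m.factorial : ℝ)) ≠ 0 :=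
    fun m => Nat.cast_ne_zero.mpr (Nat.factorial_ne_zero _)
  have hcomp : ∀ j l : ℕ, hjk d n ω j (j + l)
      = (((n.factorial : ℝ) * (d + n).factorial * d.factorial) /
          (((n - j).factorial : ℝ) * j.factorial * (d + j).factorial)) * ω ^ j
        * (ω ^ l / l.factorial) := by
    intro j l
    unfold hjk
    rw [if_pos (Nat.le_add_right j l), Nat.add_sub_cancel_left, pow_add]
    field_simp
  have hinj : ∀ j : ℕ, Function.Injective (fun l : ℕ => j + l) := by
    intro j a c hac
    simpa using hac
  have hzero : ∀ j, ∀ k ∉ Set.range (fun l : ℕ => j + l), hjk d n ω j k = 0 := by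
    intro j k hk
    have hjle : ¬ j ≤ k := fun hle => hk ⟨k - j, show j + (k - j) = k by omega⟩
    unfold hjk
    rw [if_neg hjle, zero_mul]
  have hsupp : ∀ j, Function.support (hjk d n ω j) ⊆ Set.range (fun l : ℕ => j + l) :=
    fun j => Function.support_subset_iff'.mpr (hzero j)
  have hsum : ∀ j, Summable (hjk d n ω j) := by
    intro j
    refine ((hinj j).summable_iff (hzero j)).mp ?_
    exact ((Real.summable_pow_div_factorial ω).mul_left _).congr
      (fun l => (hcomp j l).symm)
  have hexp : Real.exp ω = ∑' l : ℕ, ω ^ l / (l.factorial : ℝ) := by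
    rw [Real.exp_eq_exp_ℝ, NormedSpace.exp_eq_tsum_div]
  have hstep : ∀ j, (∑' k, hjk d n ω j k)
      = (((n.factorial : ℝ) * (d + n).factorial * d.factorial) /
          (((n - j).factorial : ℝ) * j.factorial * (d + j).factorial)) * ω ^ j
        * Real.exp ω := by
    intro j
    calc (∑' k, hjk d n ω j k) = ∑' l, hjk d n ω j (j + l) :=
          ((hinj j).tsum_eq (hsupp j)).symm
      _ = ∑' l, (((n.factorial : ℝ) * (d + n).factorial * d.factorial) /
              (((n - j).factorial : ℝ) * j.factorial * (d + j).factorial)) * ω ^ j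
            * (ω ^ l / l.factorial) := tsum_congr (hcomp j)
      _ = (((n.factorial : ℝ) * (d + n).factorial * d.factorial) /
              (((n - j).factorial : ℝ) * j.factorial * (d + j).factorial)) * ω ^ j
            * ∑' l : ℕ, ω ^ l / (l.factorial : ℝ) := tsum_mul_left
      _ = _ := by rw [← hexp]
  have hb : b d n ω = ∑' k, ∑ j ∈ Finset.range (n + 1), hjk d n ω j k := by
    rw [Summable.tsum_finsetSum (fun j _ => hsum j)]
    unfold b
    rw [Finset.mul_sum]
    refine Finset.sum_congr rfl fun j _ => ?_
    rw [hstep j]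
    ring
  rw [hb]
  refine tsum_congr fun k => ?_
  have key : ∑ j ∈ Finset.range (n + 1),
      (if j ≤ k then ((n.factorial : ℝ) * (d + n).factorial * d.factorial) /
          (((n - j).factorial : ℝ) * j.factorial * (d + j).factorial * (k - j).factorial)
        else 0)
      = (d.factorial : ℝ) * (d + n + k).factorial / ((d + k).factorial * k.factorial) := by
    have vdm : ((k + (d + n)).choose n : ℕ)
        = ∑ j ∈ Finset.range (n + 1), k.choose j * (d + n).choose (n - j) := by
      rw [Nat.add_choose_eq]
      exact Finset.Nat.sum_antidiagonal_eq_sum_range_succ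
        (fun p q => k.choose p * (d + n).choose q) n
    have term : ∀ j ∈ Finset.range (n + 1),
        (if j ≤ k then ((n.factorial : ℝ) * (d + n).factorial * d.factorial) /
            (((n - j).factorial : ℝ) * j.factorial * (d + j).factorial * (k - j).factorial)
          else 0)
        = ((k.choose j * (d + n).choose (n - j) : ℕ) : ℝ)
            * ((n.factorial : ℝ) * d.factorial / k.factorial) := by
      intro j hj
      have hjn : j ≤ n := Finset.mem_range_succ_iff.mp hj
      by_cases hjkle : j ≤ k
      · rw [if_pos hjkle, Nat.cast_mul, Nat.cast_choose ℝ hjkle,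
          Nat.cast_choose ℝ (show n - j ≤ d + n by omega),
          show d + n - (n - j) = d + j by omega]
        field_simp
      · rw [if_neg hjkle, Nat.choose_eq_zero_of_lt (by omega)]
        simp
    rw [Finset.sum_congr rfl term, ← Finset.sum_mul, ← Nat.cast_sum, ← vdm,
      Nat.cast_choose ℝ (show n ≤ k + (d + n) by omega),
      show k + (d + n) - n = d + k by omega, show k + (d + n) = d + n + k by omega]
    field_simp
  unfold hjk
  rw [← Finset.sum_mul, key]
  ring

lemma partb (d M : ℕ) (c : ℕ → ℝ) (hc : ∀ n, 0 ≤ c n) (ω : ℝ) (hω : 0 ≤ ω) :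
    (∫ x in Set.Ioi (0:ℝ), x ^ d * Real.exp (-x) * F d (ω * x) *
        ∑ n ∈ Finset.range M, c n * x ^ n)
      = ∑ n ∈ Finset.range M, c n * b d n ω := by
  set G : ℕ → ℝ → ℝ := fun k x =>
    ((d.factorial : ℝ) / ((d + k).factorial * k.factorial) * ω ^ k) *
      (x ^ (d + k) * Real.exp (-x) * ∑ n ∈ Finset.range M, c n * x ^ n) with hG
  have hGint : ∀ k, IntegrableOn (G k) (Set.Ioi 0) :=
    fun k => (poly_int (d + k) M c).1.const_mul _
  have hGval : ∀ k, (∫ x in Set.Ioi (0:ℝ), G k x)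
      = ((d.factorial : ℝ) / ((d + k).factorial * k.factorial) * ω ^ k) *
          ∑ n ∈ Finset.range M, c n * ((d + k + n).factorial : ℝ) := by
    intro k
    simp only [hG]
    rw [integral_const_mul, (poly_int (d + k) M c).2]
  have heq : ∀ k, ((d.factorial : ℝ) / ((d + k).factorial * k.factorial) * ω ^ k) *
        (∑ n ∈ Finset.range M, c n * ((d + k + n).factorial : ℝ))
      = ∑ n ∈ Finset.range M, c n * ((d.factorial : ℝ) / ((d + k).factorial * k.factorial)
          * ω ^ k * ((d + n + k).factorial : ℝ)) := by
    intro k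
    rw [Finset.mul_sum]
    refine Finset.sum_congr rfl fun n _ => ?_
    rw [show d + k + n = d + n + k by omega]
    ring
  have hsummable : Summable (fun k =>
      ((d.factorial : ℝ) / ((d + k).factorial * k.factorial) * ω ^ k) *
        ∑ n ∈ Finset.range M, c n * ((d + k + n).factorial : ℝ)) := by
    rw [summable_congr heq]
    exact summable_sum fun n _ => ((sum_core d n ω hω).mul_left (c n))
  have hGnn : ∀ k, ∀ x ∈ Set.Ioi (0:ℝ), 0 ≤ G k x := by
    intro k x hx
    have hx' : (0:ℝ) < x := hx
    have hS : 0 ≤ ∑ n ∈ Finset.range M, c n * x ^ n :=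
      Finset.sum_nonneg fun n _ => mul_nonneg (hc n) (by positivity)
    simp only [hG]
    refine mul_nonneg (mul_nonneg (by positivity) (pow_nonneg hω k)) ?_
    exact mul_nonneg (mul_nonneg (by positivity) (Real.exp_pos _).le) hS
  have hnorm : ∀ k, (∫ x in Set.Ioi (0:ℝ), ‖G k x‖) = ∫ x in Set.Ioi (0:ℝ), G k x :=
    fun k => setIntegral_congr_fun measurableSet_Ioi
      fun x hx => Real.norm_of_nonneg (hGnn k x hx)
  have hnormsum : Summable fun k => ∫ x in Set.Ioi (0:ℝ), ‖G k x‖ :=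
    (summable_congr fun k => (hnorm k).trans (hGval k)).mpr hsummable
  have hpt : ∀ x : ℝ, x ^ d * Real.exp (-x) * F d (ω * x) *
      ∑ n ∈ Finset.range M, c n * x ^ n = ∑' k, G k x := by
    intro x
    simp only [hG, F]
    calc x ^ d * Real.exp (-x) *
          (∑' k : ℕ, (d.factorial : ℝ) / ((d + k).factorial * k.factorial) * (ω * x) ^ k) *
          (∑ n ∈ Finset.range M, c n * x ^ n)
        = (x ^ d * Real.exp (-x)) *
            ((∑' k : ℕ, (d.factorial : ℝ) / ((d + k).factorial * k.factorial) * (ω * x) ^ k) *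
              (∑ n ∈ Finset.range M, c n * x ^ n)) := by ring
      _ = (x ^ d * Real.exp (-x)) *
            (∑' k : ℕ, ((d.factorial : ℝ) / ((d + k).factorial * k.factorial) * (ω * x) ^ k) *
              (∑ n ∈ Finset.range M, c n * x ^ n)) := by rw [tsum_mul_right]
      _ = ∑' k : ℕ, (x ^ d * Real.exp (-x)) *
            (((d.factorial : ℝ) / ((d + k).factorial * k.factorial) * (ω * x) ^ k) *
              (∑ n ∈ Finset.range M, c n * x ^ n)) := by rw [tsum_mul_left]
      _ = ∑' k : ℕ, ((d.factorial : ℝ) / ((d + k).factorial * k.factorial) * ω ^ k) *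
            (x ^ (d + k) * Real.exp (-x) * ∑ n ∈ Finset.range M, c n * x ^ n) := by
          refine tsum_congr fun k => ?_
          rw [mul_pow, pow_add]
          ring
  calc (∫ x in Set.Ioi (0:ℝ), x ^ d * Real.exp (-x) * F d (ω * x) *
          ∑ n ∈ Finset.range M, c n * x ^ n)
      = ∫ x in Set.Ioi (0:ℝ), ∑' k, G k x :=
        setIntegral_congr_fun measurableSet_Ioi fun x _ => hpt x
    _ = ∑' k, ∫ x in Set.Ioi (0:ℝ), G k x :=
        (integral_tsum_of_summable_integral_norm (fun k => hGint k) hnormsum).symm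
    _ = ∑' k, ∑ n ∈ Finset.range M, c n *
          ((d.factorial : ℝ) / ((d + k).factorial * k.factorial) * ω ^ k *
            ((d + n + k).factorial : ℝ)) := by
        refine tsum_congr fun k => ?_
        rw [hGval k, heq k]
    _ = ∑ n ∈ Finset.range M, ∑' k, c n *
          ((d.factorial : ℝ) / ((d + k).factorial * k.factorial) * ω ^ k *
            ((d + n + k).factorial : ℝ)) :=
        Summable.tsum_finsetSum fun n _ => ((sum_core d n ω hω).mul_left (c n))
    _ = ∑ n ∈ Finset.range M, c n * b d n ω := by
        refine Finset.sum_congr rfl fun n _ => ?_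
        rw [tsum_mul_left, tsum_val]

/-- Evaluations of the auxiliary functions `𝒥_i^{(2)}` and `𝒦_i^{(2)}` of Appendix A
(with `d = K - N`), where `P(x) = ∑_{n=0}^N C(N,n) n! (d!/(d+n)!) γ^n x^n` is the
terminating Gauss hypergeometric function `₂F₁(1, -N; d+1; -γ x)`:
(a) `∫_0^∞ x^{d+i-1} e^{-x} P(x) dx = ∑_{n=0}^N C(N,n) n! (d!/(d+n)!) (d+i+n-1)! γ^n`;
(b) `∫_0^∞ x^d e^{-x} F_d(ω x) P(x) dx = ∑_{n=0}^N C(N,n) n! (d!/(d+n)!) γ^n b_d(n, ω)`. -/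
theorem stmt9 (d N i : ℕ) (hi : 1 ≤ i) (γ ω : ℝ) (hγ : 0 ≤ γ) (hω : 0 ≤ ω) :
    ((∫ x in Set.Ioi (0 : ℝ), x ^ (d + i - 1) * Real.exp (-x) *
        ∑ n ∈ Finset.range (N + 1), (N.choose n : ℝ) * (n.factorial : ℝ) *
          ((d.factorial : ℝ) / ((d + n).factorial : ℝ)) * γ ^ n * x ^ n)
      = ∑ n ∈ Finset.range (N + 1), (N.choose n : ℝ) * (n.factorial : ℝ) *
          ((d.factorial : ℝ) / ((d + n).factorial : ℝ)) *
          ((d + i + n - 1).factorial : ℝ) * γ ^ n) ∧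
    ((∫ x in Set.Ioi (0 : ℝ), x ^ d * Real.exp (-x) * F d (ω * x) *
        ∑ n ∈ Finset.range (N + 1), (N.choose n : ℝ) * (n.factorial : ℝ) *
          ((d.factorial : ℝ) / ((d + n).factorial : ℝ)) * γ ^ n * x ^ n)
      = ∑ n ∈ Finset.range (N + 1), (N.choose n : ℝ) * (n.factorial : ℝ) *
          ((d.factorial : ℝ) / ((d + n).factorial : ℝ)) * γ ^ n * b d n ω) := by
  constructor
  · refine Eq.trans (poly_int (d + i - 1) (N + 1)
      (fun n => (N.choose n : ℝ) * (n.factorial : ℝ) *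
        ((d.factorial : ℝ) / ((d + n).factorial : ℝ)) * γ ^ n)).2 ?_
    refine Finset.sum_congr rfl fun n _ => ?_
    rw [show d + i - 1 + n = d + i + n - 1 by omega]
    ring
  · exact partb d (N + 1)
      (fun n => (N.choose n : ℝ) * (n.factorial : ℝ) *
        ((d.factorial : ℝ) / ((d + n).factorial : ℝ)) * γ ^ n)
      (fun n => by positivity) ω hω
end
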